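/- arXiv:2602.12653 — 5 statements merged into one kernel-verified Lean document; each statement's English description precedes it below -/
import Mathlib

section
/- In the single-sample model, E[tr(S_n²)/p] = tr(Σ²)/p + (p/n)·(tr(Σ)/p)² + (1/n)·{tr(Σ²)/p + ((ν₄−3)/p)·tr(𝒟(Σ)²)}. -/
open Matrix MeasureTheory ProbabilityTheory Filter Finset

namespace PaperDefs

/-- Sample covariance matrix `S = n⁻¹ ∑ x_k x_kᵀ` from data `x 0, …, x (nn-1)`. -/
noncomputable def sampleCov (p nn : ℕ) (x : ℕ → Fin p → ℝ) : Matrix (Fin p) (Fin p) ℝ :=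
  (nn : ℝ)⁻¹ • ∑ k ∈ Finset.range nn, Matrix.vecMulVec (x k) (x k)

/-- The estimator `η̂₄` built from the data. -/
noncomputable def etaHat (p nn : ℕ) (x : ℕ → Fin p → ℝ) : ℝ :=
  (((nn - 4).factorial : ℝ) / (4 * p * (nn.factorial : ℝ))) *
    ∑ j1 ∈ Finset.range nn, ∑ j2 ∈ Finset.range nn, ∑ j3 ∈ Finset.range nn,
      ∑ j4 ∈ Finset.range nn,
        if j1 ≠ j2 ∧ j1 ≠ j3 ∧ j1 ≠ j4 ∧ j2 ≠ j3 ∧ j2 ≠ j4 ∧ j3 ≠ j4 then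
          (dotProduct (x j1 - x j2) (x j1 - x j2)
            - dotProduct (x j3 - x j4) (x j3 - x j4)) ^ 2
        else 0

/-- Diagonal entry `Ĝ_{ii}` of the sample Gram matrix. -/
noncomputable def gHatDiag (p nn : ℕ) (x : ℕ → Fin p → ℝ) : ℝ :=
  ((sampleCov p nn x * sampleCov p nn x).trace / p
      - ((p : ℝ) / nn) * ((sampleCov p nn x).trace / p) ^ 2
      - (((p : ℝ) / nn) / p - ((p : ℝ) / nn) ^ 2 / (p : ℝ) ^ 2) * etaHat p nn x) /
    ((1 - 2 * ((p : ℝ) / nn) / p) * (1 - ((p : ℝ) / nn) / p))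

/-- The sample Gram matrix `Ĝ` built from data `x i k : Fin p → ℝ`, sample sizes `nn i`. -/
noncomputable def gHat (p : ℕ) (nn : ℕ → ℕ) (x : ℕ → ℕ → Fin p → ℝ) (i j : ℕ) : ℝ :=
  if i = j then gHatDiag p (nn i) (x i)
  else (sampleCov p (nn i) (x i) * sampleCov p (nn j) (x j)).trace / p

/-- Determinant of the principal submatrix of `G` on the index set `s`. -/
noncomputable def subdet (G : ℕ → ℕ → ℝ) (s : Finset ℕ) : ℝ :=
  Matrix.det (Matrix.of fun i j : s => G i.1 j.1)

/-- `M^{(k)}`: average of the `k×k` principal minors of `G` over `k`-subsets of `{0,…,q-1}`. -/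
noncomputable def Mavg (G : ℕ → ℕ → ℝ) (q k : ℕ) : ℝ :=
  ((q.choose k : ℝ))⁻¹ * ∑ s ∈ (Finset.range q).powersetCard k, subdet G s

/-- Population Gram matrix entries `G_{ij} = tr(Σ_i Σ_j)/p`. -/
noncomputable def gramG (p : ℕ) (Sig : ℕ → Matrix (Fin p) (Fin p) ℝ) (i j : ℕ) : ℝ :=
  (Sig i * Sig j).trace / p

/-- `𝒟(A)`: the diagonal matrix with the same diagonal as `A`. -/
noncomputable def dgn {m : Type*} [DecidableEq m] (A : Matrix m m ℝ) : Matrix m m ℝ :=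
  Matrix.diagonal fun i => A i i

/-- `μ(A₁, A₂ | Λ)` (with a given square root `ΛHalf` of `Λ`). -/
noncomputable def muBil (p : ℕ) (ν₄ : ℝ) (Lam LamHalf A1 A2 : Matrix (Fin p) (Fin p) ℝ) : ℝ :=
  (2 / p) * (Lam * A1 * Lam * A2).trace
    + ((ν₄ - 3) / p) * (dgn (LamHalf * A1 * LamHalf) * dgn (LamHalf * A2 * LamHalf)).trace

/-- The (random) sample Gram matrix built from noise `z` and square roots `Sighalf`. -/
noncomputable def gHatRV (p : ℕ) (nn : ℕ → ℕ) {Ω : Type*}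
    (Sighalf : ℕ → Matrix (Fin p) (Fin p) ℝ)
    (z : ℕ → ℕ → Fin p → Ω → ℝ) (ω : Ω) : ℕ → ℕ → ℝ :=
  gHat p nn fun i k => (Sighalf i).mulVec fun j => z i k j ω

/-- The (random) statistic `M̂^{(k)}`. -/
noncomputable def mHatRV (p q : ℕ) (nn : ℕ → ℕ) {Ω : Type*}
    (Sighalf : ℕ → Matrix (Fin p) (Fin p) ℝ)
    (z : ℕ → ℕ → Fin p → Ω → ℝ) (k : ℕ) (ω : Ω) : ℝ :=
  Mavg (gHatRV p nn Sighalf z ω) q k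

/-- `β_p = q⁻¹ ∑ᵢ c_{i,p}² G_{ii}²`. -/
noncomputable def betaP (p q : ℕ) (nn : ℕ → ℕ) (Sig : ℕ → Matrix (Fin p) (Fin p) ℝ) : ℝ :=
  (q : ℝ)⁻¹ * ∑ i ∈ Finset.range q, ((p : ℝ) / nn i) ^ 2 * (gramG p Sig i i) ^ 2

/-- `β̂_p = q⁻¹ ∑ᵢ c_{i,p}² Ĝ_{ii}²`. -/
noncomputable def betaHatRV (p q : ℕ) (nn : ℕ → ℕ) {Ω : Type*}
    (Sighalf : ℕ → Matrix (Fin p) (Fin p) ℝ)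
    (z : ℕ → ℕ → Fin p → Ω → ℝ) (ω : Ω) : ℝ :=
  (q : ℝ)⁻¹ * ∑ i ∈ Finset.range q, ((p : ℝ) / nn i) ^ 2 * (gHatRV p nn Sighalf z ω i i) ^ 2

/-- The "matrix determinant": Laplace expansion along the first row `(top, Σ_{j₁}, …, Σ_{j_d})`,
the other rows being `(⟨Σ_{j_r}, top⟩, ⟨Σ_{j_r}, Σ_{j₁}⟩, …, ⟨Σ_{j_r}, Σ_{j_d}⟩)`, where
`J = {j₁ < ⋯ < j_d}` and `⟨A, B⟩ = tr(AB)/p`. -/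
noncomputable def detRow (p d : ℕ) (Sig : ℕ → Matrix (Fin p) (Fin p) ℝ)
    (top : Matrix (Fin p) (Fin p) ℝ) (J : Finset ℕ) : Matrix (Fin p) (Fin p) ℝ :=
  if h : J.card = d then
    let j := J.orderEmbOfFin h
    let B : Fin (d + 1) → Matrix (Fin p) (Fin p) ℝ := Fin.cons top fun l => Sig (j l)
    ∑ k : Fin (d + 1),
      ((-1 : ℝ) ^ (k : ℕ) *
        Matrix.det (Matrix.of fun r t : Fin d => (Sig (j r) * B (k.succAbove t)).trace / p)) • B k
  else 0

/-- The part `∑_{k=1}^{d} (-1)^{k+1} C_k(Σ;J) • Σ_{i_k}` of the Laplace expansion. -/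
noncomputable def detRow0 (p d : ℕ) (Sig : ℕ → Matrix (Fin p) (Fin p) ℝ)
    (top : Matrix (Fin p) (Fin p) ℝ) (J : Finset ℕ) : Matrix (Fin p) (Fin p) ℝ :=
  if h : J.card = d then
    let j := J.orderEmbOfFin h
    let B : Fin (d + 1) → Matrix (Fin p) (Fin p) ℝ := Fin.cons top fun l => Sig (j l)
    ∑ k : Fin d,
      ((-1 : ℝ) ^ (((k : ℕ) + 1) + 1) *
        Matrix.det (Matrix.of fun r t : Fin d =>
          (Sig (j r) * B ((k.succ : Fin (d + 1)).succAbove t)).trace / p)) • Sig (j k)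
  else 0

/-- Determinant of the `(d+1)×(d+1)` Gram matrix of `(top, Σ_{i₁}, …, Σ_{i_d})`. -/
noncomputable def gramDetExt (p d : ℕ) (Sig : ℕ → Matrix (Fin p) (Fin p) ℝ)
    (top : Matrix (Fin p) (Fin p) ℝ) (J : Finset ℕ) : ℝ :=
  if h : J.card = d then
    let j := J.orderEmbOfFin h
    let B : Fin (d + 1) → Matrix (Fin p) (Fin p) ℝ := Fin.cons top fun l => Sig (j l)
    Matrix.det (Matrix.of fun r s : Fin (d + 1) => (B r * B s).trace / p)
  else 0

/-- The matrix `R_i` from Theorem 2.1. -/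
noncomputable def rMat (p q d : ℕ) (Sig : ℕ → Matrix (Fin p) (Fin p) ℝ) (i : ℕ) :
    Matrix (Fin p) (Fin p) ℝ :=
  (((q - 1).choose d : ℝ))⁻¹ •
    ∑ J ∈ ((Finset.range q).erase i).powersetCard d, detRow p d Sig (Sig i) J

/-- `r_p^{(d₀)}` from Theorem 2.1. -/
noncomputable def rP (p q d : ℕ) (nn : ℕ → ℕ) (ν₄ : ℝ)
    (Sig Sighalf : ℕ → Matrix (Fin p) (Fin p) ℝ) : ℝ :=
  (q : ℝ)⁻¹ * ∑ i ∈ Finset.range q,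
    ((p : ℝ) / nn i) *
      ((2 / p) * ((Sighalf i * rMat p q d Sig i * Sighalf i)
            * (Sighalf i * rMat p q d Sig i * Sighalf i)).trace
        + ((ν₄ - 3) / p) * (dgn (Sighalf i * rMat p q d Sig i * Sighalf i)
            * dgn (Sighalf i * rMat p q d Sig i * Sighalf i)).trace)

end PaperDefs

namespace PaperDefs

/-- The (random) sample covariance matrix of a single sample. -/
noncomputable def sampleCovRV (p nn : ℕ) {Ω : Type*} (Sighalf : Matrix (Fin p) (Fin p) ℝ)
    (z : ℕ → Fin p → Ω → ℝ) (ω : Ω) : Matrix (Fin p) (Fin p) ℝ :=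
  sampleCov p nn fun k => Sighalf.mulVec fun j => z k j ω

end PaperDefs


namespace Statement1Aux

open Matrix MeasureTheory ProbabilityTheory Finset

set_option linter.unusedSectionVars false

lemma aux_abs_pow_le (x : ℝ) (e : ℕ) (he : e ≤ 4) : |x ^ e| ≤ 1 + x ^ 4 := by
  have h4 : (0:ℝ) ≤ x ^ 4 := by positivity
  rcases abs_cases x with ⟨h, _⟩ | ⟨h, _⟩ <;>
  · interval_cases e <;> rw [abs_pow] <;> nlinarith [sq_nonneg (|x| - 1), sq_nonneg (|x|^2 - 1),
      abs_nonneg x, sq_nonneg (|x|^2 - |x|), sq_abs x]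

lemma aux_abs_quad_le (a b c d : ℝ) : |a * b * c * d| ≤ a ^ 4 + b ^ 4 + c ^ 4 + d ^ 4 := by
  have h1 : |a * b| ≤ (a ^ 2 + b ^ 2) / 2 := by
    rw [abs_le]; constructor <;> nlinarith [sq_nonneg (a + b), sq_nonneg (a - b)]
  have h2 : |c * d| ≤ (c ^ 2 + d ^ 2) / 2 := by
    rw [abs_le]; constructor <;> nlinarith [sq_nonneg (c + d), sq_nonneg (c - d)]
  calc |a * b * c * d| = |a * b| * |c * d| := by rw [← abs_mul]; ring_nf
    _ ≤ ((a ^ 2 + b ^ 2) / 2) * ((c ^ 2 + d ^ 2) / 2) := by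
        apply mul_le_mul h1 h2 (abs_nonneg _) (by positivity)
    _ ≤ a ^ 4 + b ^ 4 + c ^ 4 + d ^ 4 := by
        nlinarith [sq_nonneg (a^2 - b^2), sq_nonneg (c^2 - d^2), sq_nonneg (a^2 + b^2 - c^2 - d^2), sq_nonneg (a^2+b^2), sq_nonneg (c^2+d^2)]

lemma aux_abs_mul_le (a b : ℝ) : |a * b| ≤ 1 + a ^ 4 + b ^ 4 := by
  have h1 : |a * b| ≤ (a ^ 2 + b ^ 2) / 2 := by
    rw [abs_le]; constructor <;> nlinarith [sq_nonneg (a + b), sq_nonneg (a - b)]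
  nlinarith [sq_nonneg (a ^ 2 - 1), sq_nonneg (b ^ 2 - 1)]

variable {Ω : Type} [MeasurableSpace Ω] {μ : Measure Ω} [IsProbabilityMeasure μ]

lemma aux_int_pow {f : Ω → ℝ} (hf : Measurable f) (h4 : Integrable (fun ω => f ω ^ 4) μ)
    (e : ℕ) (he : e ≤ 4) : Integrable (fun ω => f ω ^ e) μ := by
  refine Integrable.mono' ((integrable_const (1:ℝ)).add h4) ((hf.pow_const e).aestronglyMeasurable)
    (Filter.Eventually.of_forall fun ω => ?_)
  simpa using aux_abs_pow_le (f ω) e he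

lemma aux_int_mul {f g : Ω → ℝ} (hf : Measurable f) (hg : Measurable g)
    (h4f : Integrable (fun ω => f ω ^ 4) μ) (h4g : Integrable (fun ω => g ω ^ 4) μ) :
    Integrable (fun ω => f ω * g ω) μ := by
  refine Integrable.mono' (((integrable_const (1:ℝ)).add h4f).add h4g)
    ((hf.mul hg).aestronglyMeasurable) (Filter.Eventually.of_forall fun ω => ?_)
  calc ‖f ω * g ω‖ = |f ω * g ω| := rfl
    _ ≤ 1 + f ω ^ 4 + g ω ^ 4 := aux_abs_mul_le (f ω) (g ω)

lemma aux_int_quad {f g h k : Ω → ℝ} (hf : Measurable f) (hg : Measurable g)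
    (hh : Measurable h) (hk : Measurable k)
    (h4f : Integrable (fun ω => f ω ^ 4) μ) (h4g : Integrable (fun ω => g ω ^ 4) μ)
    (h4h : Integrable (fun ω => h ω ^ 4) μ) (h4k : Integrable (fun ω => k ω ^ 4) μ) :
    Integrable (fun ω => f ω * g ω * (h ω * k ω)) μ := by
  refine Integrable.mono' (((h4f.add h4g).add h4h).add h4k)
    (((hf.mul hg).mul (hh.mul hk)).aestronglyMeasurable)
    (Filter.Eventually.of_forall fun ω => ?_)
  calc ‖f ω * g ω * (h ω * k ω)‖ = |f ω * g ω * h ω * k ω| := by rw [Real.norm_eq_abs]; ring_nf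
    _ ≤ _ := aux_abs_quad_le (f ω) (g ω) (h ω) (k ω)

lemma quad_moment {ι : Type*} [DecidableEq ι] (ν₄ : ℝ) (m : ι → Ω → ℝ)
    (hmeas : ∀ i, Measurable (m i))
    (hindep : iIndepFun m μ)
    (h1 : ∀ i, ∫ ω, m i ω ∂μ = 0)
    (h2 : ∀ i, ∫ ω, (m i ω) ^ 2 ∂μ = 1)
    (h4 : ∀ i, ∫ ω, (m i ω) ^ 4 ∂μ = ν₄)
    (hint4 : ∀ i, Integrable (fun ω => (m i ω) ^ 4) μ)
    (i1 i2 i3 i4 : ι) :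
    ∫ ω, m i1 ω * m i2 ω * (m i3 ω * m i4 ω) ∂μ =
      (if i1 = i2 then 1 else 0) * (if i3 = i4 then 1 else 0)
      + (if i1 = i3 then 1 else 0) * (if i2 = i4 then 1 else 0)
      + (if i1 = i4 then 1 else 0) * (if i2 = i3 then 1 else 0)
      + (ν₄ - 3) * ((if i1 = i2 then (1:ℝ) else 0) * (if i1 = i3 then 1 else 0)
          * (if i1 = i4 then 1 else 0)) := by
  have I1 : ∀ i, Integrable (m i) μ := fun i => by
    simpa using aux_int_pow (hmeas i) (hint4 i) 1 (by norm_num)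
  have I3 : ∀ i, Integrable (fun ω => m i ω ^ 3) μ := fun i =>
    aux_int_pow (hmeas i) (hint4 i) 3 (by norm_num)
  have Imul : ∀ i j, Integrable (fun ω => m i ω * m j ω) μ := fun i j =>
    aux_int_mul (hmeas i) (hmeas j) (hint4 i) (hint4 j)
  have E2' : ∀ i, ∫ ω, m i ω * m i ω ∂μ = 1 := fun i => by
    rw [show (fun ω => m i ω * m i ω) = fun ω => m i ω ^ 2 from funext fun ω => by ring]
    exact h2 i
  have Emul : ∀ i j, i ≠ j → ∫ ω, m i ω * m j ω ∂μ = 0 := by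
    intro i j hij
    have := (hindep.indepFun hij).integral_fun_mul_eq_mul_integral (I1 i).aestronglyMeasurable (I1 j).aestronglyMeasurable
    rw [h1 j, mul_zero] at this
    exact this
  have E31 : ∀ i j, i ≠ j → ∫ ω, m i ω ^ 3 * m j ω ∂μ = 0 := by
    intro i j hij
    have hI : IndepFun (fun ω => m i ω ^ 3) (m j) μ :=
      (hindep.indepFun hij).comp (measurable_id.pow_const 3) measurable_id
    have := hI.integral_fun_mul_eq_mul_integral (I3 i).aestronglyMeasurable (I1 j).aestronglyMeasurable
    rw [h1 j, mul_zero] at this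
    exact this
  have Epair : ∀ i j k l : ι, i ≠ k → i ≠ l → j ≠ k → j ≠ l →
      ∫ ω, m i ω * m j ω * (m k ω * m l ω) ∂μ =
        (∫ ω, m i ω * m j ω ∂μ) * ∫ ω, m k ω * m l ω ∂μ := by
    intro i j k l hik hil hjk hjl
    have hI := hindep.indepFun_mul_mul hmeas i j k l hik hil hjk hjl
    exact hI.integral_fun_mul_eq_mul_integral (Imul i j).aestronglyMeasurable (Imul k l).aestronglyMeasurable
  by_cases h12 : i1 = i2
  · subst h12
    by_cases h34 : i3 = i4
    · subst h34
      by_cases h13 : i1 = i3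
      · subst h13
        rw [show (fun ω => m i1 ω * m i1 ω * (m i1 ω * m i1 ω))
            = fun ω => m i1 ω ^ 4 from funext fun ω => by ring]
        rw [h4 i1]; simp; ring
      · rw [Epair i1 i1 i3 i3 h13 h13 h13 h13, E2' i1, E2' i3]
        simp [h13]
    · by_cases h13 : i1 = i3
      · subst h13
        have h14 : i1 ≠ i4 := h34
        rw [show (fun ω => m i1 ω * m i1 ω * (m i1 ω * m i4 ω))
            = fun ω => m i1 ω ^ 3 * m i4 ω from funext fun ω => by ring]
        rw [E31 i1 i4 h14]; simp [h34, h14]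
      · by_cases h14 : i1 = i4
        · subst h14
          rw [show (fun ω => m i1 ω * m i1 ω * (m i3 ω * m i1 ω))
              = fun ω => m i1 ω ^ 3 * m i3 ω from funext fun ω => by ring]
          rw [E31 i1 i3 h13]; simp [h34, h13, fun h : i1 = i3 => h13 h]
        · rw [Epair i1 i1 i3 i4 h13 h14 h13 h14, E2' i1, Emul i3 i4 h34]
          simp [h13, h14, h34]
  · by_cases h34 : i3 = i4
    · subst h34
      by_cases h31 : i3 = i1
      · subst h31
        have h23 : i2 ≠ i3 := fun h => h12 h.symm
        rw [show (fun ω => m i3 ω * m i2 ω * (m i3 ω * m i3 ω))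
            = fun ω => m i3 ω ^ 3 * m i2 ω from funext fun ω => by ring]
        rw [E31 i3 i2 h12]; simp [h12, h23]
      · by_cases h32 : i3 = i2
        · subst h32
          rw [show (fun ω => m i1 ω * m i3 ω * (m i3 ω * m i3 ω))
              = fun ω => m i3 ω ^ 3 * m i1 ω from funext fun ω => by ring]
          rw [E31 i3 i1 (fun h => h31 h)]
          simp [h12, fun h : i1 = i3 => h31 h.symm]
        · have h13 : i1 ≠ i3 := fun h => h31 h.symm
          have h23 : i2 ≠ i3 := fun h => h32 h.symm
          rw [Epair i1 i2 i3 i3 h13 h13 h23 h23, Emul i1 i2 h12, E2' i3]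
          simp [h12, h13, h23]
    · by_cases h13 : i1 = i3
      · subst h13
        by_cases h24 : i2 = i4
        · subst h24
          rw [show (fun ω => m i1 ω * m i2 ω * (m i1 ω * m i2 ω))
              = fun ω => m i1 ω * m i1 ω * (m i2 ω * m i2 ω) from funext fun ω => by ring]
          rw [Epair i1 i1 i2 i2 h12 h12 h12 h12, E2' i1, E2' i2]
          simp [h12, h34, fun h : i1 = i2 => h12 h]
        · have h14 : i1 ≠ i4 := fun h => h34 (h ▸ rfl)
          rw [show (fun ω => m i1 ω * m i2 ω * (m i1 ω * m i4 ω))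
              = fun ω => m i1 ω * m i1 ω * (m i2 ω * m i4 ω) from funext fun ω => by ring]
          rw [Epair i1 i1 i2 i4 h12 h14 h12 h14, E2' i1, Emul i2 i4 h24]
          simp [h12, h24, h14]
      · by_cases h14 : i1 = i4
        · subst h14
          by_cases h23 : i2 = i3
          · subst h23
            rw [show (fun ω => m i1 ω * m i2 ω * (m i2 ω * m i1 ω))
                = fun ω => m i1 ω * m i1 ω * (m i2 ω * m i2 ω) from funext fun ω => by ring]
            rw [Epair i1 i1 i2 i2 h12 h12 h12 h12, E2' i1, E2' i2]
            simp [h12, h13]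
          · rw [show (fun ω => m i1 ω * m i2 ω * (m i3 ω * m i1 ω))
                = fun ω => m i1 ω * m i1 ω * (m i2 ω * m i3 ω) from funext fun ω => by ring]
            rw [Epair i1 i1 i2 i3 h12 h13 h12 h13, E2' i1, Emul i2 i3 h23]
            simp [h12, h13, h23]
        · by_cases h23 : i2 = i3
          · subst h23
            have h42 : i4 ≠ i2 := fun h => h34 h.symm
            rw [show (fun ω => m i1 ω * m i2 ω * (m i2 ω * m i4 ω))
                = fun ω => m i1 ω * m i4 ω * (m i2 ω * m i2 ω) from funext fun ω => by ring]
            rw [Epair i1 i4 i2 i2 h12 h12 h42 h42, Emul i1 i4 h14, zero_mul]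
            simp [h12, h13, h14]
          · by_cases h24 : i2 = i4
            · subst h24
              have h32 : i3 ≠ i2 := fun h => h23 h.symm
              rw [show (fun ω => m i1 ω * m i2 ω * (m i3 ω * m i2 ω))
                  = fun ω => m i1 ω * m i3 ω * (m i2 ω * m i2 ω) from funext fun ω => by ring]
              rw [Epair i1 i3 i2 i2 h12 h12 h32 h32, Emul i1 i3 h13, zero_mul]
              simp [h12, h13, h14, h23]
            · rw [Epair i1 i2 i3 i4 h13 h14 h23 h24, Emul i1 i2 h12, zero_mul]
              simp [h12, h13, h14, h23, h24, h34]

lemma deltaSum2 (p : ℕ) (S : Matrix (Fin p) (Fin p) ℝ) :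
    (∑ a : Fin p, ∑ b : Fin p, ∑ c : Fin p, ∑ d : Fin p,
      S a b * S c d * ((if a = c then (1:ℝ) else 0) * (if b = d then 1 else 0)))
    = ∑ a : Fin p, ∑ b : Fin p, S a b * S a b := by
  simp [mul_ite, ite_mul, mul_one, mul_zero, zero_mul, one_mul, Finset.sum_ite_eq,
    Finset.sum_ite_eq', Finset.mem_univ]

lemma deltaSum1 (p : ℕ) (S : Matrix (Fin p) (Fin p) ℝ) (v : ℝ) :
    (∑ a : Fin p, ∑ b : Fin p, ∑ c : Fin p, ∑ d : Fin p,
      S a b * S c d * ((if a = b then (1:ℝ) else 0) * (if c = d then 1 else 0)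
        + (if a = c then (1:ℝ) else 0) * (if b = d then 1 else 0)
        + (if a = d then (1:ℝ) else 0) * (if b = c then 1 else 0)
        + v * ((if a = b then (1:ℝ) else 0) * (if a = c then 1 else 0) * (if a = d then 1 else 0))))
    = (∑ a : Fin p, S a a) * (∑ a : Fin p, S a a)
      + (∑ a : Fin p, ∑ b : Fin p, S a b * S a b)
      + (∑ a : Fin p, ∑ b : Fin p, S a b * S b a)
      + v * ∑ a : Fin p, S a a * S a a := by
  simp only [mul_add, Finset.sum_add_distrib]
  congr 1
  congr 1
  congr 1
  · rw [Finset.sum_mul_sum]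
    simp [mul_ite, ite_mul, mul_one, mul_zero, zero_mul, one_mul, Finset.sum_ite_eq,
      Finset.sum_ite_eq', Finset.mem_univ]
  · simp [mul_ite, ite_mul, mul_one, mul_zero, zero_mul, one_mul, Finset.sum_ite_eq,
      Finset.sum_ite_eq', Finset.mem_univ]
  · simp [mul_ite, ite_mul, mul_one, mul_zero, zero_mul, one_mul, Finset.sum_ite_eq,
      Finset.sum_ite_eq', Finset.mem_univ]
  · rw [Finset.mul_sum]
    simp [mul_ite, ite_mul, mul_one, mul_zero, zero_mul, one_mul, Finset.sum_ite_eq,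
      Finset.sum_ite_eq', Finset.mem_univ, Finset.mul_sum, mul_comm, mul_left_comm]

lemma integral_sum6 {A B C D E F : Type*}
    (sa : Finset A) (sb : Finset B) (sc : Finset C) (sd : Finset D) (se : Finset E) (sf : Finset F)
    (g : A → B → C → D → E → F → Ω → ℝ)
    (hg : ∀ a ∈ sa, ∀ b ∈ sb, ∀ c ∈ sc, ∀ d ∈ sd, ∀ e ∈ se, ∀ f ∈ sf,
      Integrable (g a b c d e f) μ) :
    ∫ ω, ∑ a ∈ sa, ∑ b ∈ sb, ∑ c ∈ sc, ∑ d ∈ sd, ∑ e ∈ se, ∑ f ∈ sf, g a b c d e f ω ∂μ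
      = ∑ a ∈ sa, ∑ b ∈ sb, ∑ c ∈ sc, ∑ d ∈ sd, ∑ e ∈ se, ∑ f ∈ sf,
          ∫ ω, g a b c d e f ω ∂μ := by
  have h5 : ∀ a ∈ sa, ∀ b ∈ sb, ∀ c ∈ sc, ∀ d ∈ sd, ∀ e ∈ se,
      Integrable (fun ω => ∑ f ∈ sf, g a b c d e f ω) μ := fun a ha b hb c hc d hd e he =>
    integrable_finset_sum _ fun f hf => hg a ha b hb c hc d hd e he f hf
  have h4 : ∀ a ∈ sa, ∀ b ∈ sb, ∀ c ∈ sc, ∀ d ∈ sd,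
      Integrable (fun ω => ∑ e ∈ se, ∑ f ∈ sf, g a b c d e f ω) μ := fun a ha b hb c hc d hd =>
    integrable_finset_sum _ fun e he => h5 a ha b hb c hc d hd e he
  have h3 : ∀ a ∈ sa, ∀ b ∈ sb, ∀ c ∈ sc,
      Integrable (fun ω => ∑ d ∈ sd, ∑ e ∈ se, ∑ f ∈ sf, g a b c d e f ω) μ :=
    fun a ha b hb c hc => integrable_finset_sum _ fun d hd => h4 a ha b hb c hc d hd
  have h2 : ∀ a ∈ sa, ∀ b ∈ sb,
      Integrable (fun ω => ∑ c ∈ sc, ∑ d ∈ sd, ∑ e ∈ se, ∑ f ∈ sf, g a b c d e f ω) μ :=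
    fun a ha b hb => integrable_finset_sum _ fun c hc => h3 a ha b hb c hc
  have h1 : ∀ a ∈ sa,
      Integrable (fun ω => ∑ b ∈ sb, ∑ c ∈ sc, ∑ d ∈ sd, ∑ e ∈ se, ∑ f ∈ sf, g a b c d e f ω) μ :=
    fun a ha => integrable_finset_sum _ fun b hb => h2 a ha b hb
  rw [integral_finset_sum sa h1]
  refine Finset.sum_congr rfl fun a ha => ?_
  rw [integral_finset_sum sb (fun b hb => h2 a ha b hb)]
  refine Finset.sum_congr rfl fun b hb => ?_
  rw [integral_finset_sum sc (fun c hc => h3 a ha b hb c hc)]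
  refine Finset.sum_congr rfl fun c hc => ?_
  rw [integral_finset_sum sd (fun d hd => h4 a ha b hb c hc d hd)]
  refine Finset.sum_congr rfl fun d hd => ?_
  rw [integral_finset_sum se (fun e he => h5 a ha b hb c hc d hd e he)]
  refine Finset.sum_congr rfl fun e he => ?_
  rw [integral_finset_sum sf (fun f hf => hg a ha b hb c hc d hd e he f hf)]

lemma pointwise_expand (p n : ℕ) (Sig Sighalf : Matrix (Fin p) (Fin p) ℝ)
    (hsqrt : Sighalf * Sighalf = Sig)
    (hHsym : ∀ a b, Sighalf b a = Sighalf a b)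
    (w : ℕ → Fin p → ℝ) :
    ((PaperDefs.sampleCov p n fun k => Sighalf.mulVec (w k)) *
        (PaperDefs.sampleCov p n fun k => Sighalf.mulVec (w k))).trace
      = ((n:ℝ)⁻¹ * (n:ℝ)⁻¹) * ∑ k ∈ range n, ∑ l ∈ range n,
          ∑ a : Fin p, ∑ b : Fin p, ∑ c : Fin p, ∑ d : Fin p,
            Sig a b * Sig c d * (w k a * w l b * (w k c * w l d)) := by
  set x : ℕ → Fin p → ℝ := fun k => Sighalf.mulVec (w k) with hx
  have hxe : ∀ k i, x k i = ∑ a : Fin p, Sighalf i a * w k a := by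
    intro k i; simp [hx, Matrix.mulVec, dotProduct]
  have hS : ∀ i j, (PaperDefs.sampleCov p n x) i j
      = (n:ℝ)⁻¹ * ∑ k ∈ range n, x k i * x k j := by
    intro i j
    simp [PaperDefs.sampleCov, Matrix.sum_apply, Matrix.vecMulVec_apply, Matrix.smul_apply,
      smul_eq_mul]
  have hsig : ∀ a b, (∑ i : Fin p, Sighalf i a * Sighalf i b) = Sig a b := by
    intro a b
    rw [← hsqrt, Matrix.mul_apply]
    exact Finset.sum_congr rfl fun i _ => by rw [hHsym a i]
  have hdot : ∀ k l, (∑ i : Fin p, x k i * x l i)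
      = ∑ a : Fin p, ∑ b : Fin p, Sig a b * (w k a * w l b) := by
    intro k l
    calc ∑ i : Fin p, x k i * x l i
        = ∑ i : Fin p, ∑ a : Fin p, ∑ b : Fin p,
            (Sighalf i a * w k a) * (Sighalf i b * w l b) := by
          refine Finset.sum_congr rfl fun i _ => ?_
          rw [hxe, hxe, Finset.sum_mul_sum]
      _ = ∑ a : Fin p, ∑ i : Fin p, ∑ b : Fin p,
            (Sighalf i a * w k a) * (Sighalf i b * w l b) := Finset.sum_comm
      _ = ∑ a : Fin p, ∑ b : Fin p, ∑ i : Fin p,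
            (Sighalf i a * w k a) * (Sighalf i b * w l b) :=
          Finset.sum_congr rfl fun a _ => Finset.sum_comm
      _ = ∑ a : Fin p, ∑ b : Fin p,
            (∑ i : Fin p, Sighalf i a * Sighalf i b) * (w k a * w l b) := by
          refine Finset.sum_congr rfl fun a _ => Finset.sum_congr rfl fun b _ => ?_
          rw [Finset.sum_mul]
          exact Finset.sum_congr rfl fun i _ => by ring
      _ = ∑ a : Fin p, ∑ b : Fin p, Sig a b * (w k a * w l b) := by
          refine Finset.sum_congr rfl fun a _ => Finset.sum_congr rfl fun b _ => ?_
          rw [hsig]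
  calc ((PaperDefs.sampleCov p n x) * (PaperDefs.sampleCov p n x)).trace
      = ∑ i : Fin p, ∑ j : Fin p,
          (PaperDefs.sampleCov p n x) i j * (PaperDefs.sampleCov p n x) j i := by
        simp [Matrix.trace, Matrix.diag, Matrix.mul_apply]
    _ = ((n:ℝ)⁻¹ * (n:ℝ)⁻¹) * ∑ i : Fin p, ∑ j : Fin p, ∑ k ∈ range n, ∑ l ∈ range n,
          (x k i * x l i) * (x k j * x l j) := by
        rw [Finset.mul_sum]
        refine Finset.sum_congr rfl fun i _ => ?_
        rw [Finset.mul_sum]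
        refine Finset.sum_congr rfl fun j _ => ?_
        rw [hS, hS]
        rw [show ((n:ℝ)⁻¹ * ∑ k ∈ range n, x k i * x k j) *
              ((n:ℝ)⁻¹ * ∑ l ∈ range n, x l j * x l i)
            = ((n:ℝ)⁻¹ * (n:ℝ)⁻¹) * ((∑ k ∈ range n, x k i * x k j) *
              (∑ l ∈ range n, x l j * x l i))
          from by ring]
        congr 1
        rw [Finset.sum_mul_sum]
        exact Finset.sum_congr rfl fun k _ => Finset.sum_congr rfl fun l _ => by ring
    _ = ((n:ℝ)⁻¹ * (n:ℝ)⁻¹) * ∑ k ∈ range n, ∑ l ∈ range n, ∑ i : Fin p, ∑ j : Fin p,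
          (x k i * x l i) * (x k j * x l j) := by
        congr 1
        calc ∑ i : Fin p, ∑ j : Fin p, ∑ k ∈ range n, ∑ l ∈ range n,
              (x k i * x l i) * (x k j * x l j)
            = ∑ i : Fin p, ∑ k ∈ range n, ∑ j : Fin p, ∑ l ∈ range n,
              (x k i * x l i) * (x k j * x l j) :=
              Finset.sum_congr rfl fun i _ => Finset.sum_comm
          _ = ∑ k ∈ range n, ∑ i : Fin p, ∑ j : Fin p, ∑ l ∈ range n,
              (x k i * x l i) * (x k j * x l j) := Finset.sum_comm
          _ = ∑ k ∈ range n, ∑ i : Fin p, ∑ l ∈ range n, ∑ j : Fin p,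
              (x k i * x l i) * (x k j * x l j) :=
              Finset.sum_congr rfl fun k _ => Finset.sum_congr rfl fun i _ => Finset.sum_comm
          _ = ∑ k ∈ range n, ∑ l ∈ range n, ∑ i : Fin p, ∑ j : Fin p,
              (x k i * x l i) * (x k j * x l j) :=
              Finset.sum_congr rfl fun k _ => Finset.sum_comm
    _ = ((n:ℝ)⁻¹ * (n:ℝ)⁻¹) * ∑ k ∈ range n, ∑ l ∈ range n,
          (∑ i : Fin p, x k i * x l i) * (∑ j : Fin p, x k j * x l j) := by
        congr 1
        refine Finset.sum_congr rfl fun k _ => Finset.sum_congr rfl fun l _ => ?_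
        rw [Finset.sum_mul_sum]
    _ = ((n:ℝ)⁻¹ * (n:ℝ)⁻¹) * ∑ k ∈ range n, ∑ l ∈ range n,
          ∑ a : Fin p, ∑ b : Fin p, ∑ c : Fin p, ∑ d : Fin p,
            (Sig a b * (w k a * w l b)) * (Sig c d * (w k c * w l d)) := by
        congr 1
        refine Finset.sum_congr rfl fun k _ => Finset.sum_congr rfl fun l _ => ?_
        rw [hdot, Finset.sum_mul_sum]
        refine Finset.sum_congr rfl fun a _ => ?_
        calc ∑ c : Fin p, (∑ b : Fin p, Sig a b * (w k a * w l b)) *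
              (∑ d : Fin p, Sig c d * (w k c * w l d))
            = ∑ c : Fin p, ∑ b : Fin p, ∑ d : Fin p,
                (Sig a b * (w k a * w l b)) * (Sig c d * (w k c * w l d)) :=
              Finset.sum_congr rfl fun c _ => by rw [Finset.sum_mul_sum]
          _ = ∑ b : Fin p, ∑ c : Fin p, ∑ d : Fin p,
                (Sig a b * (w k a * w l b)) * (Sig c d * (w k c * w l d)) := Finset.sum_comm
    _ = _ := by
      congr 1
      refine Finset.sum_congr rfl fun k _ => Finset.sum_congr rfl fun l _ => ?_
      refine Finset.sum_congr rfl fun a _ => Finset.sum_congr rfl fun b _ => ?_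
      refine Finset.sum_congr rfl fun c _ => Finset.sum_congr rfl fun d _ => by ring

end Statement1Aux


set_option maxHeartbeats 1000000 in
/-- In the single-sample model,
`E[tr(S_n²)/p] = tr(Σ²)/p + (p/n)(tr(Σ)/p)² + (1/n){tr(Σ²)/p + ((ν₄−3)/p) tr(𝒟(Σ)²)}`. -/
theorem statement1
    (p n : ℕ) (hp : 0 < p) (hn : 0 < n)
    {Ω : Type} [MeasurableSpace Ω] (μ : MeasureTheory.Measure Ω) [IsProbabilityMeasure μ]
    (ν₄ : ℝ)
    (z : ℕ → Fin p → Ω → ℝ)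
    (hmeas : ∀ k (j : Fin p), k < n → Measurable (z k j))
    (hindep : iIndepFun
      (fun kj : {k : ℕ // k < n} × Fin p => z kj.1.1 kj.2) μ)
    (hident : ∀ k k' (j j' : Fin p), k < n → k' < n →
      IdentDistrib (z k j) (z k' j') μ μ)
    (hmean : ∀ k (j : Fin p), k < n → ∫ ω, z k j ω ∂μ = 0)
    (hvar : ∀ k (j : Fin p), k < n → ∫ ω, (z k j ω) ^ 2 ∂μ = 1)
    (hm4 : ∀ k (j : Fin p), k < n → ∫ ω, (z k j ω) ^ 4 ∂μ = ν₄)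
    (hint4 : ∀ k (j : Fin p), k < n → Integrable (fun ω => (z k j ω) ^ 4) μ)
    (Sig Sighalf : Matrix (Fin p) (Fin p) ℝ)
    (hSig : Sig.PosSemidef) (hSighalf : Sighalf.PosSemidef)
    (hsqrt : Sighalf * Sighalf = Sig) :
    ∫ ω, ((PaperDefs.sampleCovRV p n Sighalf z ω)
          * (PaperDefs.sampleCovRV p n Sighalf z ω)).trace / p ∂μ
      = (Sig * Sig).trace / p + ((p : ℝ) / n) * (Sig.trace / p) ^ 2
        + (1 / (n : ℝ)) * ((Sig * Sig).trace / p
            + ((ν₄ - 3) / p) * (PaperDefs.dgn Sig * PaperDefs.dgn Sig).trace) := by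
  classical
  have hn0 : (n:ℝ) ≠ 0 := Nat.cast_ne_zero.mpr hn.ne'
  have hp0 : (p:ℝ) ≠ 0 := Nat.cast_ne_zero.mpr hp.ne'
  have hHsym : ∀ a b, Sighalf b a = Sighalf a b := fun a b => by
    simpa using hSighalf.1.apply a b
  have hSsym : ∀ a b, Sig b a = Sig a b := fun a b => by
    simpa using hSig.1.apply a b
  set A : ℝ := ∑ a : Fin p, Sig a a with hA
  set B : ℝ := ∑ a : Fin p, ∑ b : Fin p, Sig a b * Sig a b with hB
  set D : ℝ := ∑ a : Fin p, Sig a a * Sig a a with hD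
  have hpt : (fun ω => ((PaperDefs.sampleCovRV p n Sighalf z ω) *
        (PaperDefs.sampleCovRV p n Sighalf z ω)).trace / p)
      = fun ω => ((p:ℝ)⁻¹ * ((n:ℝ)⁻¹ * (n:ℝ)⁻¹)) *
          ∑ k ∈ Finset.range n, ∑ l ∈ Finset.range n,
            ∑ a : Fin p, ∑ b : Fin p, ∑ c : Fin p, ∑ d : Fin p,
              Sig a b * Sig c d * (z k a ω * z l b ω * (z k c ω * z l d ω)) := by
    funext ω
    have h := Statement1Aux.pointwise_expand p n Sig Sighalf hsqrt hHsym (fun k j => z k j ω)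
    beta_reduce at h
    rw [show PaperDefs.sampleCovRV p n Sighalf z ω
        = PaperDefs.sampleCov p n fun k => Sighalf.mulVec fun j => z k j ω from rfl]
    rw [h]
    ring
  have hI : ∀ k ∈ Finset.range n, ∀ l ∈ Finset.range n, ∀ a ∈ (Finset.univ : Finset (Fin p)),
      ∀ b ∈ (Finset.univ : Finset (Fin p)), ∀ c ∈ (Finset.univ : Finset (Fin p)),
      ∀ d ∈ (Finset.univ : Finset (Fin p)),
      Integrable (fun ω => Sig a b * Sig c d *
        (z k a ω * z l b ω * (z k c ω * z l d ω))) μ := by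
    intro k hk l hl a _ b _ c _ d _
    have hk' := Finset.mem_range.mp hk
    have hl' := Finset.mem_range.mp hl
    exact (Statement1Aux.aux_int_quad (hmeas k a hk') (hmeas l b hl') (hmeas k c hk')
      (hmeas l d hl') (hint4 k a hk') (hint4 l b hl') (hint4 k c hk') (hint4 l d hl')).const_mul _
  have hswap := Statement1Aux.integral_sum6 (μ := μ) (Finset.range n) (Finset.range n)
    (Finset.univ : Finset (Fin p)) Finset.univ Finset.univ Finset.univ
    (fun k l a b c d ω => Sig a b * Sig c d * (z k a ω * z l b ω * (z k c ω * z l d ω))) hI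
  beta_reduce at hswap
  have hquad := fun (i1 i2 i3 i4 : {k : ℕ // k < n} × Fin p) =>
    Statement1Aux.quad_moment (μ := μ) ν₄ (fun kj => z kj.1.1 kj.2)
      (fun i => hmeas i.1.1 i.2 i.1.2) hindep (fun i => hmean i.1.1 i.2 i.1.2)
      (fun i => hvar i.1.1 i.2 i.1.2) (fun i => hm4 i.1.1 i.2 i.1.2)
      (fun i => hint4 i.1.1 i.2 i.1.2) i1 i2 i3 i4
  have hQ : ∀ k ∈ Finset.range n, ∀ l ∈ Finset.range n,
      (∑ a : Fin p, ∑ b : Fin p, ∑ c : Fin p, ∑ d : Fin p,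
        ∫ ω, Sig a b * Sig c d * (z k a ω * z l b ω * (z k c ω * z l d ω)) ∂μ)
      = if k = l then A * A + B + B + (ν₄ - 3) * D else B := by
    intro k hk l hl
    have hk' : k < n := Finset.mem_range.mp hk
    have hl' : l < n := Finset.mem_range.mp hl
    by_cases hkl : k = l
    · subst hkl
      rw [if_pos rfl]
      have hterm : ∀ a b c d : Fin p,
          ∫ ω, Sig a b * Sig c d * (z k a ω * z k b ω * (z k c ω * z k d ω)) ∂μ
          = Sig a b * Sig c d * ((if a = b then (1:ℝ) else 0) * (if c = d then 1 else 0)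
              + (if a = c then (1:ℝ) else 0) * (if b = d then 1 else 0)
              + (if a = d then (1:ℝ) else 0) * (if b = c then 1 else 0)
              + (ν₄ - 3) * ((if a = b then (1:ℝ) else 0) * (if a = c then 1 else 0)
                  * (if a = d then 1 else 0))) := by
        intro a b c d
        rw [MeasureTheory.integral_const_mul]
        congr 1
        have h := hquad ⟨⟨k, hk'⟩, a⟩ ⟨⟨k, hk'⟩, b⟩ ⟨⟨k, hk'⟩, c⟩ ⟨⟨k, hk'⟩, d⟩
        simpa using h
      calc (∑ a : Fin p, ∑ b : Fin p, ∑ c : Fin p, ∑ d : Fin p,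
            ∫ ω, Sig a b * Sig c d * (z k a ω * z k b ω * (z k c ω * z k d ω)) ∂μ)
          = ∑ a : Fin p, ∑ b : Fin p, ∑ c : Fin p, ∑ d : Fin p,
              Sig a b * Sig c d * ((if a = b then (1:ℝ) else 0) * (if c = d then 1 else 0)
                + (if a = c then (1:ℝ) else 0) * (if b = d then 1 else 0)
                + (if a = d then (1:ℝ) else 0) * (if b = c then 1 else 0)
                + (ν₄ - 3) * ((if a = b then (1:ℝ) else 0) * (if a = c then 1 else 0)
                    * (if a = d then 1 else 0))) :=
            Finset.sum_congr rfl fun a _ => Finset.sum_congr rfl fun b _ =>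
              Finset.sum_congr rfl fun c _ => Finset.sum_congr rfl fun d _ => hterm a b c d
        _ = A * A + B + (∑ a : Fin p, ∑ b : Fin p, Sig a b * Sig b a) + (ν₄ - 3) * D :=
            Statement1Aux.deltaSum1 p Sig (ν₄ - 3)
        _ = A * A + B + B + (ν₄ - 3) * D := by
            congr 1
            congr 1
            exact Finset.sum_congr rfl fun a _ => Finset.sum_congr rfl fun b _ => by
              rw [hSsym a b]
    · rw [if_neg hkl]
      have hterm : ∀ a b c d : Fin p,
          ∫ ω, Sig a b * Sig c d * (z k a ω * z l b ω * (z k c ω * z l d ω)) ∂μ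
          = Sig a b * Sig c d * ((if a = c then (1:ℝ) else 0) * (if b = d then 1 else 0)) := by
        intro a b c d
        rw [MeasureTheory.integral_const_mul]
        congr 1
        have h := hquad ⟨⟨k, hk'⟩, a⟩ ⟨⟨l, hl'⟩, b⟩ ⟨⟨k, hk'⟩, c⟩ ⟨⟨l, hl'⟩, d⟩
        simpa [hkl, Subtype.ext_iff] using h
      calc (∑ a : Fin p, ∑ b : Fin p, ∑ c : Fin p, ∑ d : Fin p,
            ∫ ω, Sig a b * Sig c d * (z k a ω * z l b ω * (z k c ω * z l d ω)) ∂μ)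
          = ∑ a : Fin p, ∑ b : Fin p, ∑ c : Fin p, ∑ d : Fin p,
              Sig a b * Sig c d * ((if a = c then (1:ℝ) else 0) * (if b = d then 1 else 0)) :=
            Finset.sum_congr rfl fun a _ => Finset.sum_congr rfl fun b _ =>
              Finset.sum_congr rfl fun c _ => Finset.sum_congr rfl fun d _ => hterm a b c d
        _ = B := Statement1Aux.deltaSum2 p Sig
  have e1 : (Sig * Sig).trace = B := by
    have : (Sig * Sig).trace = ∑ a : Fin p, ∑ b : Fin p, Sig a b * Sig b a := by
      simp [Matrix.trace, Matrix.diag, Matrix.mul_apply]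
    rw [this, hB]
    exact Finset.sum_congr rfl fun a _ => Finset.sum_congr rfl fun b _ => by rw [hSsym a b]
  have e2 : Sig.trace = A := by
    rw [hA]; simp [Matrix.trace, Matrix.diag]
  have e3 : (PaperDefs.dgn Sig * PaperDefs.dgn Sig).trace = D := by
    rw [hD]; simp [PaperDefs.dgn, Matrix.diagonal_mul_diagonal, Matrix.trace_diagonal]
  calc ∫ ω, ((PaperDefs.sampleCovRV p n Sighalf z ω) *
          (PaperDefs.sampleCovRV p n Sighalf z ω)).trace / p ∂μ
      = ∫ ω, ((p:ℝ)⁻¹ * ((n:ℝ)⁻¹ * (n:ℝ)⁻¹)) *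
          ∑ k ∈ Finset.range n, ∑ l ∈ Finset.range n,
            ∑ a : Fin p, ∑ b : Fin p, ∑ c : Fin p, ∑ d : Fin p,
              Sig a b * Sig c d * (z k a ω * z l b ω * (z k c ω * z l d ω)) ∂μ := by rw [hpt]
    _ = ((p:ℝ)⁻¹ * ((n:ℝ)⁻¹ * (n:ℝ)⁻¹)) *
          ∫ ω, ∑ k ∈ Finset.range n, ∑ l ∈ Finset.range n,
            ∑ a : Fin p, ∑ b : Fin p, ∑ c : Fin p, ∑ d : Fin p,
              Sig a b * Sig c d * (z k a ω * z l b ω * (z k c ω * z l d ω)) ∂μ :=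
        MeasureTheory.integral_const_mul _ _
    _ = ((p:ℝ)⁻¹ * ((n:ℝ)⁻¹ * (n:ℝ)⁻¹)) *
          ∑ k ∈ Finset.range n, ∑ l ∈ Finset.range n,
            ∑ a : Fin p, ∑ b : Fin p, ∑ c : Fin p, ∑ d : Fin p,
              ∫ ω, Sig a b * Sig c d * (z k a ω * z l b ω * (z k c ω * z l d ω)) ∂μ := by
        rw [hswap]
    _ = ((p:ℝ)⁻¹ * ((n:ℝ)⁻¹ * (n:ℝ)⁻¹)) *
          ∑ k ∈ Finset.range n, ∑ l ∈ Finset.range n,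
            (if k = l then A * A + B + B + (ν₄ - 3) * D else B) := by
        congr 1
        exact Finset.sum_congr rfl fun k hk => Finset.sum_congr rfl fun l hl => hQ k hk l hl
    _ = ((p:ℝ)⁻¹ * ((n:ℝ)⁻¹ * (n:ℝ)⁻¹)) *
          ((n:ℝ) * ((n:ℝ) * B + (A * A + B + B + (ν₄ - 3) * D - B))) := by
        congr 1
        have hrow : ∀ k ∈ Finset.range n,
            (∑ l ∈ Finset.range n, if k = l then A * A + B + B + (ν₄ - 3) * D else B)
            = (n:ℝ) * B + (A * A + B + B + (ν₄ - 3) * D - B) := by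
          intro k hk
          have hsplit : ∀ l ∈ Finset.range n,
              (if k = l then A * A + B + B + (ν₄ - 3) * D else B)
              = B + (if k = l then A * A + B + B + (ν₄ - 3) * D - B else 0) := by
            intro l _; by_cases h : k = l <;> simp [h]
          rw [Finset.sum_congr rfl hsplit, Finset.sum_add_distrib, Finset.sum_const,
            Finset.card_range, Finset.sum_ite_eq, if_pos hk, nsmul_eq_mul]
        rw [Finset.sum_congr rfl hrow, Finset.sum_const, Finset.card_range, nsmul_eq_mul]
    _ = _ := by
        rw [e1, e2, e3]
        field_simp
        ring
end

section
/- In the single-sample model, for any p×p real symmetric matrices A₁ and A₂: E[(tr(S_n A₁)/p)·(tr(S_n A₂)/p)] = (tr(Σ A₁)/p)·(tr(Σ A₂)/p) + (1/(pn))·μ(A₁,A₂|Σ). -/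
open Matrix MeasureTheory ProbabilityTheory Filter Finset

section Statement2Aux

open Matrix MeasureTheory ProbabilityTheory Finset

namespace Stmt2Aux

lemma quart_bound (a b c d : ℝ) : |a*b*c*d| ≤ (a^4+b^4+c^4+d^4)/4 := by
  rw [abs_le]
  constructor <;> nlinarith [sq_nonneg (a*b - c*d), sq_nonneg (a*b + c*d), sq_nonneg (a^2-b^2),
    sq_nonneg (c^2-d^2), sq_nonneg (a^2+b^2), sq_nonneg (c^2+d^2), sq_nonneg a, sq_nonneg b,
    sq_nonneg c, sq_nonneg d]

lemma abs_pow_le (x : ℝ) {m : ℕ} (hm : m ≤ 4) : |x| ^ m ≤ 1 + x ^ 4 := by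
  rcases le_or_gt (|x|) 1 with h | h
  · have : |x| ^ m ≤ 1 := pow_le_one₀ (abs_nonneg x) h
    nlinarith [pow_nonneg (sq_nonneg x) 2, sq_nonneg (x^2)]
  · have h1 : |x| ^ m ≤ |x| ^ 4 := pow_le_pow_right₀ h.le hm
    have h2 : |x| ^ 4 = x ^ 4 := by
      rw [← abs_pow]; exact abs_of_nonneg (by positivity)
    linarith

section Moments
variable {Ω : Type} [MeasurableSpace Ω] {μ : Measure Ω} [IsProbabilityMeasure μ]
variable {ι : Type*} {f : ι → Ω → ℝ}

lemma int_pow {i : ι} (hm : Measurable (f i)) (h4 : Integrable (fun ω => f i ω ^ 4) μ)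
    {m : ℕ} (hle : m ≤ 4) : Integrable (fun ω => f i ω ^ m) μ := by
  refine Integrable.mono' ((integrable_const (1:ℝ)).add h4) ((hm.pow_const m).aestronglyMeasurable)
    (Filter.Eventually.of_forall fun ω => ?_)
  rw [Real.norm_eq_abs, abs_pow]
  exact abs_pow_le _ hle

omit [IsProbabilityMeasure μ] in
lemma int_mul4 {a b c d : ι} (hma : Measurable (f a)) (hmb : Measurable (f b))
    (hmc : Measurable (f c)) (hmd : Measurable (f d))
    (ha : Integrable (fun ω => f a ω ^ 4) μ) (hb : Integrable (fun ω => f b ω ^ 4) μ)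
    (hc : Integrable (fun ω => f c ω ^ 4) μ) (hd : Integrable (fun ω => f d ω ^ 4) μ) :
    Integrable (fun ω => f a ω * f b ω * f c ω * f d ω) μ := by
  refine Integrable.mono' ((((ha.add hb).add hc).add hd).div_const 4)
    (((hma.mul hmb).mul hmc).mul hmd).aestronglyMeasurable
    (Filter.Eventually.of_forall fun ω => ?_)
  rw [Real.norm_eq_abs]
  calc |f a ω * f b ω * f c ω * f d ω| ≤ (f a ω ^ 4 + f b ω ^ 4 + f c ω ^ 4 + f d ω ^ 4) / 4 :=
        quart_bound _ _ _ _
    _ = _ := by simp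

variable (hindep : iIndepFun f μ)
  (hmeas : ∀ i, Measurable (f i))
  (hint4 : ∀ i, Integrable (fun ω => f i ω ^ 4) μ)

include hindep hmeas hint4

lemma mom2 {a b : ι} (hab : a ≠ b) (m1 m2 : ℕ) (h1 : m1 ≤ 4) (h2 : m2 ≤ 4) :
    ∫ ω, f a ω ^ m1 * f b ω ^ m2 ∂μ
      = (∫ ω, f a ω ^ m1 ∂μ) * ∫ ω, f b ω ^ m2 ∂μ := by
  have hi : IndepFun (fun ω => f a ω ^ m1) (fun ω => f b ω ^ m2) μ :=
    (hindep.indepFun hab).comp (measurable_id.pow_const m1) (measurable_id.pow_const m2)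
  exact hi.integral_mul_eq_mul_integral (int_pow (hmeas a) (hint4 a) h1).aestronglyMeasurable
    (int_pow (hmeas b) (hint4 b) h2).aestronglyMeasurable

lemma mom3 {a b c : ι} (hab : a ≠ b) (hac : a ≠ c) (hbc : b ≠ c) (m1 m2 : ℕ)
    (h1 : m1 ≤ 4) (h2 : m2 ≤ 4) :
    ∫ ω, f a ω ^ m1 * f b ω ^ m2 * f c ω ∂μ
      = (∫ ω, f a ω ^ m1 * f b ω ^ m2 ∂μ) * ∫ ω, f c ω ∂μ := by
  have hi : IndepFun (fun ω => f a ω ^ m1 * f b ω ^ m2) (f c) μ := by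
    have := hindep.indepFun_prodMk hmeas a b c hac hbc
    exact this.comp (by fun_prop : Measurable fun q : ℝ × ℝ => q.1 ^ m1 * q.2 ^ m2) measurable_id
  have hint : Integrable (fun ω => f a ω ^ m1 * f b ω ^ m2) μ := by
    have hi2 : IndepFun (fun ω => f a ω ^ m1) (fun ω => f b ω ^ m2) μ :=
      (hindep.indepFun hab).comp (measurable_id.pow_const m1) (measurable_id.pow_const m2)
    exact hi2.integrable_mul (int_pow (hmeas a) (hint4 a) h1) (int_pow (hmeas b) (hint4 b) h2)
  have hc1 : Integrable (f c) μ := by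
    have := int_pow (hmeas c) (hint4 c) (show 1 ≤ 4 by norm_num)
    simpa using this
  exact hi.integral_mul_eq_mul_integral hint.aestronglyMeasurable hc1.aestronglyMeasurable

lemma int_mul2 (a b : ι) : Integrable (fun ω => f a ω * f b ω) μ := by
  by_cases hab : a = b
  · subst hab
    have := int_pow (hmeas a) (hint4 a) (show 2 ≤ 4 by norm_num)
    refine this.congr (Filter.Eventually.of_forall fun ω => by ring)
  · have h1 : Integrable (f a) μ := by
      simpa using int_pow (hmeas a) (hint4 a) (show 1 ≤ 4 by norm_num)
    have h2 : Integrable (f b) μ := by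
      simpa using int_pow (hmeas b) (hint4 b) (show 1 ≤ 4 by norm_num)
    exact (hindep.indepFun hab).integrable_mul h1 h2

lemma mom22 {a b c d : ι} (hac : a ≠ c) (had : a ≠ d) (hbc : b ≠ c) (hbd : b ≠ d) :
    ∫ ω, f a ω * f b ω * f c ω * f d ω ∂μ
      = (∫ ω, f a ω * f b ω ∂μ) * ∫ ω, f c ω * f d ω ∂μ := by
  have hi : IndepFun (fun ω => f a ω * f b ω) (fun ω => f c ω * f d ω) μ := by
    have := hindep.indepFun_prodMk_prodMk hmeas a b c d hac had hbc hbd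
    exact this.comp (by fun_prop : Measurable fun q : ℝ × ℝ => q.1 * q.2)
      (by fun_prop : Measurable fun q : ℝ × ℝ => q.1 * q.2)
  have := hi.integral_mul_eq_mul_integral (int_mul2 hindep hmeas hint4 a b).aestronglyMeasurable
    (int_mul2 hindep hmeas hint4 c d).aestronglyMeasurable
  calc ∫ ω, f a ω * f b ω * f c ω * f d ω ∂μ
      = ∫ ω, (f a ω * f b ω) * (f c ω * f d ω) ∂μ := by
        congr 1; funext ω; ring
    _ = _ := this

variable {ν₄ : ℝ} (hmean : ∀ i, ∫ ω, f i ω ∂μ = 0)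
  (hvar : ∀ i, ∫ ω, f i ω ^ 2 ∂μ = 1) (hm4 : ∀ i, ∫ ω, f i ω ^ 4 ∂μ = ν₄)

include hmean hvar hm4

variable [DecidableEq ι]

omit hm4 in
lemma pairmom (a b : ι) : ∫ ω, f a ω * f b ω ∂μ = if a = b then 1 else 0 := by
  by_cases hab : a = b
  · subst hab
    simp only [if_pos rfl]
    rw [show (fun ω => f a ω * f a ω) = fun ω => f a ω ^ 2 from funext fun ω => by ring]
    exact hvar a
  · rw [if_neg hab]
    have := mom2 hindep hmeas hint4 hab 1 1 (by norm_num) (by norm_num)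
    simp only [pow_one] at this
    rw [this, hmean a, hmean b, mul_zero]

lemma moment4 (a b c d : ι) :
    ∫ ω, f a ω * f b ω * f c ω * f d ω ∂μ =
      (if a = b then (1:ℝ) else 0) * (if c = d then 1 else 0)
      + (if a = c then 1 else 0) * (if b = d then 1 else 0)
      + (if a = d then 1 else 0) * (if b = c then 1 else 0)
      + (ν₄ - 3) * (if a = b ∧ a = c ∧ a = d then 1 else 0) := by
  have m2 := fun {x y : ι} (h : x ≠ y) (m1 m2 : ℕ) (h1 : m1 ≤ 4) (h2 : m2 ≤ 4) =>
    mom2 hindep hmeas hint4 h m1 m2 h1 h2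
  have m3 := fun {x y z : ι} h1 h2 h3 (n1 n2 : ℕ) (hn1 : n1 ≤ 4) (hn2 : n2 ≤ 4) =>
    mom3 hindep hmeas hint4 (a := x) (b := y) (c := z) h1 h2 h3 n1 n2 hn1 hn2
  by_cases hab : a = b
  · subst hab
    by_cases hcd : c = d
    · subst hcd
      by_cases hac : a = c
      · subst hac
        rw [show (fun ω => f a ω * f a ω * f a ω * f a ω) = fun ω => f a ω ^ 4 from
          funext fun ω => by ring, hm4 a]
        simp; ring
      · rw [show (fun ω => f a ω * f a ω * f c ω * f c ω) = fun ω => f a ω ^ 2 * f c ω ^ 2 from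
          funext fun ω => by ring, m2 hac 2 2 (by norm_num) (by norm_num), hvar a, hvar c]
        simp [hac]
    · have hrhs : ((if a = a then (1:ℝ) else 0) * (if c = d then 1 else 0)
          + (if a = c then 1 else 0) * (if a = d then 1 else 0)
          + (if a = d then 1 else 0) * (if a = c then 1 else 0)
          + (ν₄ - 3) * (if a = a ∧ a = c ∧ a = d then 1 else 0)) = 0 := by
        by_cases hac : a = c
        · have had : a ≠ d := fun h => hcd (hac.symm.trans h)
          simp [hcd, had]
        · simp [hcd, hac]
      rw [hrhs]
      by_cases hac : a = c
      · subst hac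
        rw [show (fun ω => f a ω * f a ω * f a ω * f d ω) = fun ω => f a ω ^ 3 * f d ω ^ 1 from
          funext fun ω => by ring, m2 hcd 3 1 (by norm_num) (by norm_num)]
        simp only [pow_one]
        rw [hmean d, mul_zero]
      · by_cases had : a = d
        · subst had
          rw [show (fun ω => f a ω * f a ω * f c ω * f a ω) = fun ω => f a ω ^ 3 * f c ω ^ 1 from
            funext fun ω => by ring, m2 hac 3 1 (by norm_num) (by norm_num)]
          simp only [pow_one]
          rw [hmean c, mul_zero]
        · rw [show (fun ω => f a ω * f a ω * f c ω * f d ω)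
              = fun ω => f a ω ^ 2 * f c ω ^ 1 * f d ω from funext fun ω => by ring,
            m3 hac had hcd 2 1 (by norm_num) (by norm_num), hmean d, mul_zero]
  · have hba : ¬ b = a := fun h => hab h.symm
    by_cases hcd : c = d
    · subst hcd
      have hrhs : ((if a = b then (1:ℝ) else 0) * (if c = c then 1 else 0)
          + (if a = c then 1 else 0) * (if b = c then 1 else 0)
          + (if a = c then 1 else 0) * (if b = c then 1 else 0)
          + (ν₄ - 3) * (if a = b ∧ a = c ∧ a = c then 1 else 0)) = 0 := by
        by_cases hac : a = c
        · have hbc : ¬ b = c := fun h => hab (hac.trans h.symm)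
          simp [hab, hbc]
        · simp [hab, hac]
      rw [hrhs]
      by_cases hac : a = c
      · subst hac
        rw [show (fun ω => f a ω * f b ω * f a ω * f a ω) = fun ω => f a ω ^ 3 * f b ω ^ 1 from
          funext fun ω => by ring, m2 hab 3 1 (by norm_num) (by norm_num)]
        simp only [pow_one]
        rw [hmean b, mul_zero]
      · by_cases hbc : b = c
        · subst hbc
          rw [show (fun ω => f a ω * f b ω * f b ω * f b ω) = fun ω => f b ω ^ 3 * f a ω ^ 1 from
            funext fun ω => by ring, m2 hba 3 1 (by norm_num) (by norm_num)]
          simp only [pow_one]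
          rw [hmean a, mul_zero]
        · have hca : ¬ c = a := fun h => hac h.symm
          have hcb : ¬ c = b := fun h => hbc h.symm
          rw [show (fun ω => f a ω * f b ω * f c ω * f c ω)
              = fun ω => f c ω ^ 2 * f a ω ^ 1 * f b ω from funext fun ω => by ring,
            m3 hca hcb hab 2 1 (by norm_num) (by norm_num), hmean b, mul_zero]
    · by_cases hac : a = c
      · subst hac
        by_cases hbd : b = d
        · subst hbd
          rw [show (fun ω => f a ω * f b ω * f a ω * f b ω) = fun ω => f a ω ^ 2 * f b ω ^ 2 from
            funext fun ω => by ring, m2 hab 2 2 (by norm_num) (by norm_num), hvar a, hvar b]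
          simp [hab, hcd, hba]
        · rw [show (fun ω => f a ω * f b ω * f a ω * f d ω)
              = fun ω => f a ω ^ 2 * f b ω ^ 1 * f d ω from funext fun ω => by ring,
            m3 hab hcd hbd 2 1 (by norm_num) (by norm_num), hmean d, mul_zero]
          simp [hab, hcd, hbd]
      · by_cases had : a = d
        · subst had
          by_cases hbc : b = c
          · subst hbc
            rw [show (fun ω => f a ω * f b ω * f b ω * f a ω)
                = fun ω => f a ω ^ 2 * f b ω ^ 2 from funext fun ω => by ring,
              m2 hab 2 2 (by norm_num) (by norm_num), hvar a, hvar b]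
            simp [hab, hac, hba]
          · rw [show (fun ω => f a ω * f b ω * f c ω * f a ω)
                = fun ω => f a ω ^ 2 * f b ω ^ 1 * f c ω from funext fun ω => by ring,
              m3 hab hac hbc 2 1 (by norm_num) (by norm_num), hmean c, mul_zero]
            have hca : ¬ c = a := fun h => hac h.symm
            simp [hab, hac, hbc, hca]
        · by_cases hbc : b = c
          · subst hbc
            rw [show (fun ω => f a ω * f b ω * f b ω * f d ω)
                = fun ω => f b ω ^ 2 * f a ω ^ 1 * f d ω from funext fun ω => by ring,
              m3 hba hcd had 2 1 (by norm_num) (by norm_num), hmean d, mul_zero]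
            simp [hab, hac, had, hcd]
          · by_cases hbd : b = d
            · subst hbd
              have hbc' : ¬ b = c := fun h => hbc h
              rw [show (fun ω => f a ω * f b ω * f c ω * f b ω)
                  = fun ω => f b ω ^ 2 * f a ω ^ 1 * f c ω from funext fun ω => by ring,
                m3 hba hbc' hac 2 1 (by norm_num) (by norm_num), hmean c, mul_zero]
              simp [hab, hac, had, hcd]
            · rw [mom22 hindep hmeas hint4 hac had hbc hbd,
                pairmom hindep hmeas hint4 hmean hvar a b,
                pairmom hindep hmeas hint4 hmean hvar c d]
              simp [hab, hac, had, hbc, hbd, hcd]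

end Moments

section MatrixAux
variable {p : ℕ}

lemma trace_vecMulVec_mul (u : Fin p → ℝ) (A : Matrix (Fin p) (Fin p) ℝ) :
    (vecMulVec u u * A).trace = u ⬝ᵥ (Aᵀ *ᵥ u) := by
  simp only [Matrix.trace, Matrix.diag, Matrix.mul_apply, Matrix.vecMulVec_apply,
    dotProduct, Matrix.mulVec, Matrix.transpose_apply]
  refine Finset.sum_congr rfl fun i _ => ?_
  rw [Finset.mul_sum]
  exact Finset.sum_congr rfl fun j _ => by ring

lemma quadform_expand (M : Matrix (Fin p) (Fin p) ℝ) (v : Fin p → ℝ) :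
    v ⬝ᵥ (M *ᵥ v) = ∑ a, ∑ b, M a b * (v a * v b) := by
  simp only [dotProduct, Matrix.mulVec, Finset.mul_sum]
  exact Finset.sum_congr rfl fun a _ => Finset.sum_congr rfl fun b _ => by ring

lemma key1 (H A : Matrix (Fin p) (Fin p) ℝ) (hH : Hᵀ = H) (hA : Aᵀ = A) (v : Fin p → ℝ) :
    (vecMulVec (H *ᵥ v) (H *ᵥ v) * A).trace = ∑ a, ∑ b, (H*A*H) a b * (v a * v b) := by
  rw [trace_vecMulVec_mul, hA, Matrix.mulVec_mulVec]
  nth_rewrite 1 [← hH]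
  rw [Matrix.mulVec_transpose, ← Matrix.dotProduct_mulVec, Matrix.mulVec_mulVec,
    ← mul_assoc, quadform_expand]

lemma delta1 (B1 B2 : Matrix (Fin p) (Fin p) ℝ) :
    ∑ a : Fin p, ∑ b : Fin p, ∑ c : Fin p, ∑ d : Fin p,
    B1 a b * B2 c d * ((if a = b then (1:ℝ) else 0) * (if c = d then 1 else 0))
    = (∑ a, B1 a a) * (∑ c, B2 c c) := by
  simp [Finset.sum_ite_eq, Finset.sum_ite_eq', mul_ite, ite_mul, Finset.mul_sum, Finset.sum_mul]
  rw [Finset.sum_comm]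

lemma delta2 (B1 B2 : Matrix (Fin p) (Fin p) ℝ) :
    ∑ a : Fin p, ∑ b : Fin p, ∑ c : Fin p, ∑ d : Fin p,
    B1 a b * B2 c d * ((if a = c then (1:ℝ) else 0) * (if b = d then 1 else 0))
    = ∑ a, ∑ b, B1 a b * B2 a b := by
  simp [Finset.sum_ite_eq, Finset.sum_ite_eq', mul_ite, ite_mul]

lemma delta3 (B1 B2 : Matrix (Fin p) (Fin p) ℝ) :
    ∑ a : Fin p, ∑ b : Fin p, ∑ c : Fin p, ∑ d : Fin p,
    B1 a b * B2 c d * ((if a = d then (1:ℝ) else 0) * (if b = c then 1 else 0))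
    = ∑ a, ∑ b, B1 a b * B2 b a := by
  simp [Finset.sum_ite_eq, Finset.sum_ite_eq', mul_ite, ite_mul]

lemma delta4 (B1 B2 : Matrix (Fin p) (Fin p) ℝ) :
    ∑ a : Fin p, ∑ b : Fin p, ∑ c : Fin p, ∑ d : Fin p,
    B1 a b * B2 c d * (if a = b ∧ a = c ∧ a = d then (1:ℝ) else 0)
    = ∑ a, B1 a a * B2 a a := by
  simp [Finset.sum_ite_eq, Finset.sum_ite_eq', mul_ite, ite_mul, ite_and]

lemma inner_eval (B1 B2 : Matrix (Fin p) (Fin p) ℝ) (κ ν' : ℝ) :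
    ∑ a : Fin p, ∑ b : Fin p, ∑ c : Fin p, ∑ d : Fin p, B1 a b * B2 c d *
      ((if a = b then (1:ℝ) else 0) * (if c = d then 1 else 0)
       + κ * ((if a = c then 1 else 0) * (if b = d then 1 else 0)
          + (if a = d then 1 else 0) * (if b = c then 1 else 0)
          + ν' * (if a = b ∧ a = c ∧ a = d then 1 else 0)))
    = (∑ a, B1 a a) * (∑ c, B2 c c)
      + κ * ((∑ a, ∑ b, B1 a b * B2 a b) + (∑ a, ∑ b, B1 a b * B2 b a)
          + ν' * ∑ a, B1 a a * B2 a a) := by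
  have expand : ∀ a b c d : Fin p, B1 a b * B2 c d *
      ((if a = b then (1:ℝ) else 0) * (if c = d then 1 else 0)
       + κ * ((if a = c then 1 else 0) * (if b = d then 1 else 0)
          + (if a = d then 1 else 0) * (if b = c then 1 else 0)
          + ν' * (if a = b ∧ a = c ∧ a = d then 1 else 0)))
      = B1 a b * B2 c d * ((if a = b then (1:ℝ) else 0) * (if c = d then 1 else 0))
        + κ * (B1 a b * B2 c d * ((if a = c then (1:ℝ) else 0) * (if b = d then 1 else 0)))
        + κ * (B1 a b * B2 c d * ((if a = d then (1:ℝ) else 0) * (if b = c then 1 else 0)))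
        + κ * ν' * (B1 a b * B2 c d * (if a = b ∧ a = c ∧ a = d then (1:ℝ) else 0)) := by
    intros; ring
  simp only [expand, Finset.sum_add_distrib, ← Finset.mul_sum]
  rw [delta1, delta2, delta3, delta4]
  ring

end MatrixAux

end Stmt2Aux

end Statement2Aux

/-- In the single-sample model, for symmetric `A₁, A₂`:
`E[(tr(S_n A₁)/p)(tr(S_n A₂)/p)] = (tr(Σ A₁)/p)(tr(Σ A₂)/p) + (1/(pn)) μ(A₁,A₂|Σ)`. -/
theorem statement2
    (p n : ℕ) (hp : 0 < p) (hn : 0 < n)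
    {Ω : Type} [MeasurableSpace Ω] (μ : MeasureTheory.Measure Ω) [IsProbabilityMeasure μ]
    (ν₄ : ℝ)
    (z : ℕ → Fin p → Ω → ℝ)
    (hmeas : ∀ k (j : Fin p), k < n → Measurable (z k j))
    (hindep : iIndepFun
      (fun kj : {k : ℕ // k < n} × Fin p => z kj.1.1 kj.2) μ)
    (hident : ∀ k k' (j j' : Fin p), k < n → k' < n →
      IdentDistrib (z k j) (z k' j') μ μ)
    (hmean : ∀ k (j : Fin p), k < n → ∫ ω, z k j ω ∂μ = 0)
    (hvar : ∀ k (j : Fin p), k < n → ∫ ω, (z k j ω) ^ 2 ∂μ = 1)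
    (hm4 : ∀ k (j : Fin p), k < n → ∫ ω, (z k j ω) ^ 4 ∂μ = ν₄)
    (hint4 : ∀ k (j : Fin p), k < n → Integrable (fun ω => (z k j ω) ^ 4) μ)
    (Sig Sighalf : Matrix (Fin p) (Fin p) ℝ)
    (hSig : Sig.PosSemidef) (hSighalf : Sighalf.PosSemidef)
    (hsqrt : Sighalf * Sighalf = Sig)
    (A1 A2 : Matrix (Fin p) (Fin p) ℝ) (hA1 : A1.IsSymm) (hA2 : A2.IsSymm) :
    ∫ ω, (((PaperDefs.sampleCovRV p n Sighalf z ω) * A1).trace / p)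
          * (((PaperDefs.sampleCovRV p n Sighalf z ω) * A2).trace / p) ∂μ
      = ((Sig * A1).trace / p) * ((Sig * A2).trace / p)
        + (1 / ((p : ℝ) * n)) * PaperDefs.muBil p ν₄ Sig Sighalf A1 A2 := by
  classical
  have hp' : (p:ℝ) ≠ 0 := Nat.cast_ne_zero.mpr hp.ne'
  have hn' : (n:ℝ) ≠ 0 := Nat.cast_ne_zero.mpr hn.ne'
  have hHt : Sighalfᵀ = Sighalf := by
    rw [← Matrix.conjTranspose_eq_transpose_of_trivial]; exact hSighalf.1
  have hA1t : A1ᵀ = A1 := hA1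
  have hA2t : A2ᵀ = A2 := hA2
  -- the independent family, reindexed
  have hmeasF : ∀ i : {k : ℕ // k < n} × Fin p,
      Measurable ((fun kj : {k : ℕ // k < n} × Fin p => z kj.1.1 kj.2) i) :=
    fun i => hmeas i.1.1 i.2 i.1.2
  have hint4F : ∀ i : {k : ℕ // k < n} × Fin p,
      Integrable (fun ω => (fun kj : {k : ℕ // k < n} × Fin p => z kj.1.1 kj.2) i ω ^ 4) μ :=
    fun i => hint4 i.1.1 i.2 i.1.2
  have hmeanF : ∀ i : {k : ℕ // k < n} × Fin p,
      ∫ ω, (fun kj : {k : ℕ // k < n} × Fin p => z kj.1.1 kj.2) i ω ∂μ = 0 :=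
    fun i => hmean i.1.1 i.2 i.1.2
  have hvarF : ∀ i : {k : ℕ // k < n} × Fin p,
      ∫ ω, (fun kj : {k : ℕ // k < n} × Fin p => z kj.1.1 kj.2) i ω ^ 2 ∂μ = 1 :=
    fun i => hvar i.1.1 i.2 i.1.2
  have hm4F : ∀ i : {k : ℕ // k < n} × Fin p,
      ∫ ω, (fun kj : {k : ℕ // k < n} × Fin p => z kj.1.1 kj.2) i ω ^ 4 ∂μ = ν₄ :=
    fun i => hm4 i.1.1 i.2 i.1.2
  have zmom : ∀ (k l : ℕ), k < n → l < n → ∀ a b c d : Fin p,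
      ∫ ω, z k a ω * z k b ω * z l c ω * z l d ω ∂μ
        = (if a = b then (1:ℝ) else 0) * (if c = d then 1 else 0)
          + (if k = l then (1:ℝ) else 0) *
            ((if a = c then (1:ℝ) else 0) * (if b = d then 1 else 0)
             + (if a = d then (1:ℝ) else 0) * (if b = c then 1 else 0)
             + (ν₄ - 3) * (if a = b ∧ a = c ∧ a = d then 1 else 0)) := by
    intro k l hk hl a b c d
    have h4 := Stmt2Aux.moment4 hindep hmeasF hint4F hmeanF hvarF hm4F
      (⟨⟨k, hk⟩, a⟩) (⟨⟨k, hk⟩, b⟩) (⟨⟨l, hl⟩, c⟩) (⟨⟨l, hl⟩, d⟩)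
    refine h4.trans ?_
    by_cases hkl : k = l
    · subst hkl
      simp only [Prod.mk.injEq, Subtype.mk.injEq, true_and, if_true, eq_self_iff_true]
      simp
      try ring
    · simp only [Prod.mk.injEq, Subtype.mk.injEq, hkl, false_and, if_false, and_false]
      simp [hkl]
  have intg : ∀ (k l : ℕ), k < n → l < n → ∀ a b c d : Fin p,
      Integrable (fun ω => ((Sighalf * A1 * Sighalf) a b * (z k a ω * z k b ω))
        * ((Sighalf * A2 * Sighalf) c d * (z l c ω * z l d ω))) μ := by
    intro k l hk hl a b c d
    have h := Stmt2Aux.int_mul4 (f := fun kj : {k : ℕ // k < n} × Fin p => z kj.1.1 kj.2)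
      (a := ⟨⟨k, hk⟩, a⟩) (b := ⟨⟨k, hk⟩, b⟩) (c := ⟨⟨l, hl⟩, c⟩) (d := ⟨⟨l, hl⟩, d⟩)
      (hmeasF _) (hmeasF _) (hmeasF _) (hmeasF _)
      (hint4F _) (hint4F _) (hint4F _) (hint4F _)
    have h2 := h.const_mul ((Sighalf * A1 * Sighalf) a b * (Sighalf * A2 * Sighalf) c d)
    exact h2.congr (Filter.Eventually.of_forall fun ω => by ring)
  have trace_eq : ∀ (A : Matrix (Fin p) (Fin p) ℝ), Aᵀ = A → ∀ ω : Ω,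
      (PaperDefs.sampleCovRV p n Sighalf z ω * A).trace
        = (n:ℝ)⁻¹ * ∑ k ∈ Finset.range n, ∑ a : Fin p, ∑ b : Fin p,
            (Sighalf * A * Sighalf) a b * (z k a ω * z k b ω) := by
    intro A hAt ω
    show ((PaperDefs.sampleCov p n fun k => Sighalf.mulVec fun j => z k j ω) * A).trace = _
    unfold PaperDefs.sampleCov
    rw [Matrix.smul_mul, Matrix.trace_smul, smul_eq_mul, Finset.sum_mul, Matrix.trace_sum]
    congr 1
    refine Finset.sum_congr rfl fun k _ => ?_
    exact Stmt2Aux.key1 Sighalf A hHt hAt _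
  have main : ∫ ω, ((PaperDefs.sampleCovRV p n Sighalf z ω * A1).trace / p)
        * ((PaperDefs.sampleCovRV p n Sighalf z ω * A2).trace / p) ∂μ
      = ((n:ℝ) * p)⁻¹ * ((n:ℝ) * p)⁻¹ *
          ∑ k ∈ Finset.range n, ∑ l ∈ Finset.range n,
            ∑ a : Fin p, ∑ b : Fin p, ∑ c : Fin p, ∑ d : Fin p,
              ∫ ω, ((Sighalf * A1 * Sighalf) a b * (z k a ω * z k b ω))
                * ((Sighalf * A2 * Sighalf) c d * (z l c ω * z l d ω)) ∂μ := by
    have e1 : ∀ ω : Ω, ((PaperDefs.sampleCovRV p n Sighalf z ω * A1).trace / p)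
        * ((PaperDefs.sampleCovRV p n Sighalf z ω * A2).trace / p)
        = ((n:ℝ) * p)⁻¹ * ((n:ℝ) * p)⁻¹ *
          ∑ k ∈ Finset.range n, ∑ l ∈ Finset.range n,
            ∑ a : Fin p, ∑ b : Fin p, ∑ c : Fin p, ∑ d : Fin p,
              ((Sighalf * A1 * Sighalf) a b * (z k a ω * z k b ω))
                * ((Sighalf * A2 * Sighalf) c d * (z l c ω * z l d ω)) := by
      intro ω
      have harr : ∀ X Y : ℝ, ((n:ℝ)⁻¹ * X) / p * (((n:ℝ)⁻¹ * Y) / p)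
          = ((n:ℝ) * p)⁻¹ * ((n:ℝ) * p)⁻¹ * (X * Y) := by
        intro X Y; field_simp
      rw [trace_eq A1 hA1t ω, trace_eq A2 hA2t ω, harr, Finset.sum_mul_sum]
      congr 1
      refine Finset.sum_congr rfl fun k _ => Finset.sum_congr rfl fun l _ => ?_
      rw [Finset.sum_mul_sum]
      refine Finset.sum_congr rfl fun a _ => ?_
      rw [Finset.sum_congr rfl fun c (_ : c ∈ Finset.univ) => Finset.sum_mul_sum
        Finset.univ Finset.univ (fun b => (Sighalf * A1 * Sighalf) a b * (z k a ω * z k b ω))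
        (fun d => (Sighalf * A2 * Sighalf) c d * (z l c ω * z l d ω))]
      exact Finset.sum_comm
    simp only [e1]
    rw [MeasureTheory.integral_const_mul]
    congr 1
    rw [MeasureTheory.integral_finset_sum _ (fun k hk =>
      integrable_finset_sum _ fun l hl => integrable_finset_sum _ fun a _ =>
      integrable_finset_sum _ fun b _ => integrable_finset_sum _ fun c _ =>
      integrable_finset_sum _ fun d _ =>
        intg k l (Finset.mem_range.mp hk) (Finset.mem_range.mp hl) a b c d)]
    refine Finset.sum_congr rfl fun k hk => ?_
    rw [MeasureTheory.integral_finset_sum _ (fun l hl =>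
      integrable_finset_sum _ fun a _ => integrable_finset_sum _ fun b _ =>
      integrable_finset_sum _ fun c _ => integrable_finset_sum _ fun d _ =>
        intg k l (Finset.mem_range.mp hk) (Finset.mem_range.mp hl) a b c d)]
    refine Finset.sum_congr rfl fun l hl => ?_
    rw [MeasureTheory.integral_finset_sum _ (fun a _ =>
      integrable_finset_sum _ fun b _ => integrable_finset_sum _ fun c _ =>
      integrable_finset_sum _ fun d _ =>
        intg k l (Finset.mem_range.mp hk) (Finset.mem_range.mp hl) a b c d)]
    refine Finset.sum_congr rfl fun a _ => ?_
    rw [MeasureTheory.integral_finset_sum _ (fun b _ =>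
      integrable_finset_sum _ fun c _ => integrable_finset_sum _ fun d _ =>
        intg k l (Finset.mem_range.mp hk) (Finset.mem_range.mp hl) a b c d)]
    refine Finset.sum_congr rfl fun b _ => ?_
    rw [MeasureTheory.integral_finset_sum _ (fun c _ =>
      integrable_finset_sum _ fun d _ =>
        intg k l (Finset.mem_range.mp hk) (Finset.mem_range.mp hl) a b c d)]
    refine Finset.sum_congr rfl fun c _ => ?_
    rw [MeasureTheory.integral_finset_sum _ (fun d _ =>
      intg k l (Finset.mem_range.mp hk) (Finset.mem_range.mp hl) a b c d)]
  have point : ∀ (k l : ℕ), k ∈ Finset.range n → l ∈ Finset.range n → ∀ a b c d : Fin p,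
      ∫ ω, ((Sighalf * A1 * Sighalf) a b * (z k a ω * z k b ω))
          * ((Sighalf * A2 * Sighalf) c d * (z l c ω * z l d ω)) ∂μ
        = (Sighalf * A1 * Sighalf) a b * (Sighalf * A2 * Sighalf) c d *
          ((if a = b then (1:ℝ) else 0) * (if c = d then 1 else 0)
           + (if k = l then (1:ℝ) else 0) *
            ((if a = c then (1:ℝ) else 0) * (if b = d then 1 else 0)
             + (if a = d then (1:ℝ) else 0) * (if b = c then 1 else 0)
             + (ν₄ - 3) * (if a = b ∧ a = c ∧ a = d then 1 else 0))) := by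
    intro k l hk hl a b c d
    rw [show (fun ω => ((Sighalf * A1 * Sighalf) a b * (z k a ω * z k b ω))
        * ((Sighalf * A2 * Sighalf) c d * (z l c ω * z l d ω)))
        = fun ω => ((Sighalf * A1 * Sighalf) a b * (Sighalf * A2 * Sighalf) c d)
          * (z k a ω * z k b ω * z l c ω * z l d ω) from funext fun ω => by ring]
    rw [MeasureTheory.integral_const_mul,
      zmom k l (Finset.mem_range.mp hk) (Finset.mem_range.mp hl) a b c d]
  -- trace identities
  have hkey : ∀ X : Matrix (Fin p) (Fin p) ℝ, Sighalf * (Sighalf * X) = Sig * X :=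
    fun X => by rw [← mul_assoc, hsqrt]
  have tr1 : ∀ A : Matrix (Fin p) (Fin p) ℝ,
      (∑ a : Fin p, (Sighalf * A * Sighalf) a a) = (Sig * A).trace := by
    intro A
    have h1 : (∑ a : Fin p, (Sighalf * A * Sighalf) a a) = (Sighalf * A * Sighalf).trace := by
      simp [Matrix.trace, Matrix.diag]
    rw [h1, Matrix.trace_mul_comm (Sighalf * A) Sighalf, hkey A]
  have hB2T : (Sighalf * A2 * Sighalf)ᵀ = Sighalf * A2 * Sighalf := by
    rw [Matrix.transpose_mul, Matrix.transpose_mul, hHt, hA2t, mul_assoc]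
  have hB2symm : ∀ a b : Fin p, (Sighalf * A2 * Sighalf) a b = (Sighalf * A2 * Sighalf) b a :=
    fun a b => congrFun (congrFun hB2T b) a
  have trS3 : (∑ a : Fin p, ∑ b : Fin p,
      (Sighalf * A1 * Sighalf) a b * (Sighalf * A2 * Sighalf) b a)
      = (Sig * A1 * Sig * A2).trace := by
    have h1 : (∑ a : Fin p, ∑ b : Fin p,
        (Sighalf * A1 * Sighalf) a b * (Sighalf * A2 * Sighalf) b a)
        = ((Sighalf * A1 * Sighalf) * (Sighalf * A2 * Sighalf)).trace := by
      simp [Matrix.trace, Matrix.diag, Matrix.mul_apply]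
    rw [h1]
    have e : (Sighalf * A1 * Sighalf) * (Sighalf * A2 * Sighalf)
        = Sighalf * (A1 * (Sig * (A2 * Sighalf))) := by
      rw [← hsqrt]; simp only [mul_assoc]
    rw [e, Matrix.trace_mul_comm]
    have e2 : (A1 * (Sig * (A2 * Sighalf))) * Sighalf = A1 * (Sig * (A2 * Sig)) := by
      simp only [mul_assoc, hsqrt]
    rw [e2, show A1 * (Sig * (A2 * Sig)) = (A1 * (Sig * A2)) * Sig from by
        simp only [mul_assoc],
      Matrix.trace_mul_comm, show Sig * A1 * Sig * A2 = Sig * (A1 * (Sig * A2)) from by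
        simp only [mul_assoc]]
  have trS2 : (∑ a : Fin p, ∑ b : Fin p,
      (Sighalf * A1 * Sighalf) a b * (Sighalf * A2 * Sighalf) a b)
      = (Sig * A1 * Sig * A2).trace := by
    rw [← trS3]
    exact Finset.sum_congr rfl fun a _ => Finset.sum_congr rfl fun b _ => by
      rw [hB2symm a b]
  have trS4 : (∑ a : Fin p, (Sighalf * A1 * Sighalf) a a * (Sighalf * A2 * Sighalf) a a)
      = (PaperDefs.dgn (Sighalf * A1 * Sighalf) * PaperDefs.dgn (Sighalf * A2 * Sighalf)).trace := by
    unfold PaperDefs.dgn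
    rw [Matrix.diagonal_mul_diagonal, Matrix.trace_diagonal]
  -- evaluate the big sum
  have inner2 : ∀ (k l : ℕ), k ∈ Finset.range n → l ∈ Finset.range n →
      (∑ a : Fin p, ∑ b : Fin p, ∑ c : Fin p, ∑ d : Fin p,
        ∫ ω, ((Sighalf * A1 * Sighalf) a b * (z k a ω * z k b ω))
          * ((Sighalf * A2 * Sighalf) c d * (z l c ω * z l d ω)) ∂μ)
      = (Sig * A1).trace * (Sig * A2).trace
        + (if k = l then (1:ℝ) else 0) *
          ((Sig * A1 * Sig * A2).trace + (Sig * A1 * Sig * A2).trace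
            + (ν₄ - 3) * (PaperDefs.dgn (Sighalf * A1 * Sighalf)
                * PaperDefs.dgn (Sighalf * A2 * Sighalf)).trace) := by
    intro k l hk hl
    have step : (∑ a : Fin p, ∑ b : Fin p, ∑ c : Fin p, ∑ d : Fin p,
        ∫ ω, ((Sighalf * A1 * Sighalf) a b * (z k a ω * z k b ω))
          * ((Sighalf * A2 * Sighalf) c d * (z l c ω * z l d ω)) ∂μ)
        = ∑ a : Fin p, ∑ b : Fin p, ∑ c : Fin p, ∑ d : Fin p,
            (Sighalf * A1 * Sighalf) a b * (Sighalf * A2 * Sighalf) c d *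
            ((if a = b then (1:ℝ) else 0) * (if c = d then 1 else 0)
             + (if k = l then (1:ℝ) else 0) *
              ((if a = c then (1:ℝ) else 0) * (if b = d then 1 else 0)
               + (if a = d then (1:ℝ) else 0) * (if b = c then 1 else 0)
               + (ν₄ - 3) * (if a = b ∧ a = c ∧ a = d then 1 else 0))) :=
      Finset.sum_congr rfl fun a _ => Finset.sum_congr rfl fun b _ =>
        Finset.sum_congr rfl fun c _ => Finset.sum_congr rfl fun d _ =>
          point k l hk hl a b c d
    rw [step, Stmt2Aux.inner_eval, tr1 A1, tr1 A2, trS2, trS3, trS4]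
  have outer : (∑ k ∈ Finset.range n, ∑ l ∈ Finset.range n,
      ∑ a : Fin p, ∑ b : Fin p, ∑ c : Fin p, ∑ d : Fin p,
        ∫ ω, ((Sighalf * A1 * Sighalf) a b * (z k a ω * z k b ω))
          * ((Sighalf * A2 * Sighalf) c d * (z l c ω * z l d ω)) ∂μ)
      = (n:ℝ) * ((n:ℝ) * ((Sig * A1).trace * (Sig * A2).trace)
          + ((Sig * A1 * Sig * A2).trace + (Sig * A1 * Sig * A2).trace
            + (ν₄ - 3) * (PaperDefs.dgn (Sighalf * A1 * Sighalf)
                * PaperDefs.dgn (Sighalf * A2 * Sighalf)).trace)) := by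
    rw [Finset.sum_congr rfl fun k hk => Finset.sum_congr rfl fun l hl => inner2 k l hk hl]
    have perk : ∀ k : ℕ, k ∈ Finset.range n →
        (∑ l ∈ Finset.range n, ((Sig * A1).trace * (Sig * A2).trace
          + (if k = l then (1:ℝ) else 0) *
            ((Sig * A1 * Sig * A2).trace + (Sig * A1 * Sig * A2).trace
              + (ν₄ - 3) * (PaperDefs.dgn (Sighalf * A1 * Sighalf)
                  * PaperDefs.dgn (Sighalf * A2 * Sighalf)).trace)))
        = (n:ℝ) * ((Sig * A1).trace * (Sig * A2).trace)
          + ((Sig * A1 * Sig * A2).trace + (Sig * A1 * Sig * A2).trace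
            + (ν₄ - 3) * (PaperDefs.dgn (Sighalf * A1 * Sighalf)
                * PaperDefs.dgn (Sighalf * A2 * Sighalf)).trace) := by
      intro k hk
      rw [Finset.sum_add_distrib, Finset.sum_const, Finset.card_range, nsmul_eq_mul]
      congr 1
      simp only [ite_mul, one_mul, zero_mul]
      rw [Finset.sum_ite_eq, if_pos hk]
    rw [Finset.sum_congr rfl perk, Finset.sum_const, Finset.card_range, nsmul_eq_mul]
  rw [main, outer]
  unfold PaperDefs.muBil
  field_simp
  ring
end

section
/- In the single-sample model, E[(tr(S_n)/p)²] = (tr(Σ)/p)² + (1/(np))·{2·tr(Σ²)/p + (ν₄−3)·tr(𝒟(Σ)²)/p}. -/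
open Matrix MeasureTheory ProbabilityTheory Filter Finset

section AuxLemmas
set_option linter.unusedSectionVars false

section Aux
variable {Ω : Type} [MeasurableSpace Ω] {μ : Measure Ω} [IsProbabilityMeasure μ]
variable {ι : Type*}

lemma aux_integrable_pow_le {g : Ω → ℝ} (hg : Measurable g)
    (h4 : Integrable (fun ω => g ω ^ 4) μ) (m : ℕ) (hm : m ≤ 4) :
    Integrable (fun ω => g ω ^ m) μ := by
  refine Integrable.mono' ((integrable_const (1:ℝ)).add h4)
    ((hg.pow_const m).aestronglyMeasurable) ?_
  filter_upwards with ω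
  have habs : ‖g ω ^ m‖ = |g ω| ^ m := by
    rw [Real.norm_eq_abs, abs_pow]
  rw [habs]
  have h4e : |g ω| ^ 4 = g ω ^ 4 := by
    rw [pow_abs, abs_of_nonneg (by positivity)]
  simp only [Pi.add_apply]
  rcases le_or_gt (|g ω|) 1 with h | h
  · have h1 : |g ω| ^ m ≤ 1 := pow_le_one₀ (abs_nonneg _) h
    nlinarith [pow_nonneg (abs_nonneg (g ω)) 4]
  · have h1 : |g ω| ^ m ≤ |g ω| ^ 4 := pow_le_pow_right₀ (le_of_lt (by linarith)) hm
    nlinarith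

lemma aux_integrable_mul4 {g1 g2 g3 g4 : Ω → ℝ}
    (h1 : Measurable g1) (h2 : Measurable g2) (h3 : Measurable g3) (h4 : Measurable g4)
    (i1 : Integrable (fun ω => g1 ω ^ 4) μ) (i2 : Integrable (fun ω => g2 ω ^ 4) μ)
    (i3 : Integrable (fun ω => g3 ω ^ 4) μ) (i4 : Integrable (fun ω => g4 ω ^ 4) μ) :
    Integrable (fun ω => g1 ω * g2 ω * g3 ω * g4 ω) μ := by
  refine Integrable.mono' (((i1.add i2).add i3).add i4)
    (((h1.mul h2).mul h3).mul h4).aestronglyMeasurable ?_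
  filter_upwards with ω
  set a := g1 ω; set b := g2 ω; set c := g3 ω; set d := g4 ω
  rw [Real.norm_eq_abs]
  simp only [Pi.add_apply]
  rcases abs_cases (a * b * c * d) with ⟨he, _⟩ | ⟨he, _⟩ <;> rw [he] <;>
    nlinarith [sq_nonneg (a*b - c*d), sq_nonneg (a*b + c*d), sq_nonneg (a^2 - b^2),
      sq_nonneg (c^2 - d^2), sq_nonneg (a^2 + b^2), sq_nonneg (c^2 + d^2)]

lemma aux_integral_prod_pow {f : ι → Ω → ℝ}
    (hind : iIndepFun f μ)
    (hmeas : ∀ i, Measurable (f i)) (r : ι → ℕ) (s : Finset ι) :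
    ∫ ω, ∏ i ∈ s, f i ω ^ r i ∂μ = ∏ i ∈ s, ∫ ω, f i ω ^ r i ∂μ := by
  classical
  induction s using Finset.induction with
  | empty => simp
  | @insert x s hx ih =>
    have hgind : iIndepFun
        (fun i => (fun t : ℝ => t ^ r i) ∘ f i) μ :=
      hind.comp (fun i (t : ℝ) => t ^ r i) (fun i => measurable_id.pow_const (r i))
    have hgmeas : ∀ i, Measurable ((fun t : ℝ => t ^ r i) ∘ f i) :=
      fun i => (hmeas i).pow_const (r i)
    have hip : IndepFun (fun ω => f x ω ^ r x)
        (∏ j ∈ s, (fun t : ℝ => t ^ r j) ∘ f j) μ :=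
      (hgind.indepFun_finsetProd_of_notMem hgmeas hx).symm
    have hfun : (∏ j ∈ s, (fun t : ℝ => t ^ r j) ∘ f j) = fun ω => ∏ j ∈ s, f j ω ^ r j := by
      funext ω; simp [Finset.prod_apply]
    rw [hfun] at hip
    rw [Finset.prod_insert hx, ← ih]
    have := hip.integral_mul_eq_mul_integral ((hmeas x).pow_const (r x)).aestronglyMeasurable
      (Finset.measurable_prod s (fun i _ => (hmeas i).pow_const (r i))).aestronglyMeasurable
    simp only [Finset.prod_insert hx]
    exact this

end Aux

section Aux2
variable {Ω : Type} [MeasurableSpace Ω] {μ : Measure Ω} [IsProbabilityMeasure μ]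
variable {ι : Type*} [DecidableEq ι] {f : ι → Ω → ℝ} {ν₄ : ℝ}
variable (hind : iIndepFun f μ)
  (hmeas : ∀ i, Measurable (f i))
  (hm0 : ∀ i, ∫ ω, f i ω ∂μ = 0)
  (hm2 : ∀ i, ∫ ω, f i ω ^ 2 ∂μ = 1)

include hind hmeas

include hm2 in
lemma auxH22 {x y : ι} (hxy : x ≠ y) : ∫ ω, f x ω ^ 2 * f y ω ^ 2 ∂μ = 1 := by
  have h := aux_integral_prod_pow hind hmeas (fun _ => 2) {x, y}
  simp only [Finset.prod_pair hxy] at h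
  rw [h, hm2 x, hm2 y, mul_one]

include hm0 in
lemma auxH31 {x y : ι} (hxy : x ≠ y) : ∫ ω, f x ω ^ 3 * f y ω ∂μ = 0 := by
  have h := aux_integral_prod_pow hind hmeas (fun i => if i = x then 3 else 1) {x, y}
  simp only [Finset.prod_pair hxy, if_pos, if_neg (show y ≠ x from hxy.symm),
    eq_self_iff_true, if_true, pow_one] at h
  rw [h, hm0 y, mul_zero]

include hm0 in
lemma auxH211 {x y w : ι} (hxy : x ≠ y) (hxw : x ≠ w) (hyw : y ≠ w) :
    ∫ ω, f x ω ^ 2 * (f y ω * f w ω) ∂μ = 0 := by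
  have hx : x ∉ ({y, w} : Finset ι) := by simp [hxy, hxw]
  have h := aux_integral_prod_pow hind hmeas (fun i => if i = x then 2 else 1) ({x, y, w} : Finset ι)
  simp only [Finset.prod_insert hx, Finset.prod_pair hyw,
    if_pos, if_neg (show y ≠ x from fun h' => hxy h'.symm),
    if_neg (show w ≠ x from fun h' => hxw h'.symm),
    eq_self_iff_true, if_true, pow_one] at h
  rw [h, hm0 y, zero_mul, mul_zero]

include hm0 in
lemma auxH1111 {x y w v : ι} (hxy : x ≠ y) (hxw : x ≠ w) (hxv : x ≠ v)
    (hyw : y ≠ w) (hyv : y ≠ v) (hwv : w ≠ v) :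
    ∫ ω, f x ω * (f y ω * (f w ω * f v ω)) ∂μ = 0 := by
  have hx : x ∉ ({y, w, v} : Finset ι) := by simp [hxy, hxw, hxv]
  have hy : y ∉ ({w, v} : Finset ι) := by simp [hyw, hyv]
  have h := aux_integral_prod_pow hind hmeas (fun _ => 1) ({x, y, w, v} : Finset ι)
  simp only [Finset.prod_insert hx, Finset.prod_insert hy, Finset.prod_pair hwv, pow_one] at h
  rw [h, hm0 x, zero_mul]

include hm0 hm2 in
lemma aux_quad (hm4 : ∀ i, ∫ ω, f i ω ^ 4 ∂μ = ν₄) (e1 e2 e3 e4 : ι) :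
    ∫ ω, f e1 ω * f e2 ω * f e3 ω * f e4 ω ∂μ =
      (if e1 = e2 then (1:ℝ) else 0) * (if e3 = e4 then 1 else 0)
      + (if e1 = e3 then 1 else 0) * (if e2 = e4 then 1 else 0)
      + (if e1 = e4 then 1 else 0) * (if e2 = e3 then 1 else 0)
      + (if e1 = e2 ∧ e1 = e3 ∧ e1 = e4 then ν₄ - 3 else 0) := by
  by_cases h12 : e1 = e2
  · subst h12
    by_cases h34 : e3 = e4
    · subst h34
      by_cases h13 : e1 = e3
      · subst h13
        rw [show (fun ω => f e1 ω * f e1 ω * f e1 ω * f e1 ω) = fun ω => f e1 ω ^ 4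
            from funext fun ω => by ring, hm4 e1]
        simp; ring
      · rw [show (fun ω => f e1 ω * f e1 ω * f e3 ω * f e3 ω)
              = fun ω => f e1 ω ^ 2 * f e3 ω ^ 2 from funext fun ω => by ring,
          auxH22 hind hmeas hm2 h13]
        simp [h13]
    · by_cases h13 : e1 = e3
      · subst h13
        rw [show (fun ω => f e1 ω * f e1 ω * f e1 ω * f e4 ω)
              = fun ω => f e1 ω ^ 3 * f e4 ω from funext fun ω => by ring,
          auxH31 hind hmeas hm0 h34]
        simp [h34]
      · by_cases h14 : e1 = e4
        · subst h14
          rw [show (fun ω => f e1 ω * f e1 ω * f e3 ω * f e1 ω)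
                = fun ω => f e1 ω ^ 3 * f e3 ω from funext fun ω => by ring,
            auxH31 hind hmeas hm0 h13]
          simp [h13, Ne.symm h13]
        · rw [show (fun ω => f e1 ω * f e1 ω * f e3 ω * f e4 ω)
                = fun ω => f e1 ω ^ 2 * (f e3 ω * f e4 ω) from funext fun ω => by ring,
            auxH211 hind hmeas hm0 h13 h14 h34]
          simp [h13, h14, h34]
  · by_cases h34 : e3 = e4
    · subst h34
      by_cases h13 : e1 = e3
      · subst h13
        rw [show (fun ω => f e1 ω * f e2 ω * f e1 ω * f e1 ω)
              = fun ω => f e1 ω ^ 3 * f e2 ω from funext fun ω => by ring,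
          auxH31 hind hmeas hm0 h12]
        simp [h12, Ne.symm h12]
      · by_cases h23 : e2 = e3
        · subst h23
          rw [show (fun ω => f e1 ω * f e2 ω * f e2 ω * f e2 ω)
                = fun ω => f e2 ω ^ 3 * f e1 ω from funext fun ω => by ring,
            auxH31 hind hmeas hm0 (Ne.symm h12)]
          simp [h12, h13]
        · rw [show (fun ω => f e1 ω * f e2 ω * f e3 ω * f e3 ω)
                = fun ω => f e3 ω ^ 2 * (f e1 ω * f e2 ω) from funext fun ω => by ring,
            auxH211 hind hmeas hm0 (Ne.symm h13) (Ne.symm h23) h12]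
          simp [h12, h13, h23]
    · by_cases h13 : e1 = e3
      · subst h13
        by_cases h24 : e2 = e4
        · subst h24
          rw [show (fun ω => f e1 ω * f e2 ω * f e1 ω * f e2 ω)
                = fun ω => f e1 ω ^ 2 * f e2 ω ^ 2 from funext fun ω => by ring,
            auxH22 hind hmeas hm2 h12]
          simp [h12, Ne.symm h12, h34]
        · rw [show (fun ω => f e1 ω * f e2 ω * f e1 ω * f e4 ω)
                = fun ω => f e1 ω ^ 2 * (f e2 ω * f e4 ω) from funext fun ω => by ring,
            auxH211 hind hmeas hm0 h12 h34 h24]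
          simp [h12, h34, h24]
      · by_cases h14 : e1 = e4
        · subst h14
          by_cases h23 : e2 = e3
          · subst h23
            rw [show (fun ω => f e1 ω * f e2 ω * f e2 ω * f e1 ω)
                  = fun ω => f e1 ω ^ 2 * f e2 ω ^ 2 from funext fun ω => by ring,
              auxH22 hind hmeas hm2 h12]
            simp [h12, h13, Ne.symm h13]
          · rw [show (fun ω => f e1 ω * f e2 ω * f e3 ω * f e1 ω)
                  = fun ω => f e1 ω ^ 2 * (f e2 ω * f e3 ω) from funext fun ω => by ring,
              auxH211 hind hmeas hm0 h12 h13 h23]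
            simp [h12, h13, h23]
        · by_cases h23 : e2 = e3
          · subst h23
            by_cases h24 : e2 = e4
            · subst h24
              rw [show (fun ω => f e1 ω * f e2 ω * f e2 ω * f e2 ω)
                    = fun ω => f e2 ω ^ 3 * f e1 ω from funext fun ω => by ring,
                auxH31 hind hmeas hm0 (Ne.symm h12)]
              simp [h12, h13, h14]
            · rw [show (fun ω => f e1 ω * f e2 ω * f e2 ω * f e4 ω)
                    = fun ω => f e2 ω ^ 2 * (f e1 ω * f e4 ω) from funext fun ω => by ring,
                auxH211 hind hmeas hm0 (Ne.symm h12) h24 h14]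
              simp [h12, h13, h14, h24]
          · by_cases h24 : e2 = e4
            · subst h24
              rw [show (fun ω => f e1 ω * f e2 ω * f e3 ω * f e2 ω)
                    = fun ω => f e2 ω ^ 2 * (f e1 ω * f e3 ω) from funext fun ω => by ring,
                auxH211 hind hmeas hm0 (Ne.symm h12) h23 h13]
              simp [h12, h13, h14, h23]
            · rw [show (fun ω => f e1 ω * f e2 ω * f e3 ω * f e4 ω)
                    = fun ω => f e1 ω * (f e2 ω * (f e3 ω * f e4 ω)) from funext fun ω => by ring,
                auxH1111 hind hmeas hm0 h12 h13 h14 h23 h24 h34]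
              simp [h12, h13, h14, h23, h24, h34]

end Aux2

end AuxLemmas

/-- In the single-sample model,
`E[(tr(S_n)/p)²] = (tr(Σ)/p)² + (1/(np)){2 tr(Σ²)/p + (ν₄−3) tr(𝒟(Σ)²)/p}`. -/
theorem statement3
    (p n : ℕ) (hp : 0 < p) (hn : 0 < n)
    {Ω : Type} [MeasurableSpace Ω] (μ : MeasureTheory.Measure Ω) [IsProbabilityMeasure μ]
    (ν₄ : ℝ)
    (z : ℕ → Fin p → Ω → ℝ)
    (hmeas : ∀ k (j : Fin p), k < n → Measurable (z k j))
    (hindep : iIndepFun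
      (fun kj : {k : ℕ // k < n} × Fin p => z kj.1.1 kj.2) μ)
    (hident : ∀ k k' (j j' : Fin p), k < n → k' < n →
      IdentDistrib (z k j) (z k' j') μ μ)
    (hmean : ∀ k (j : Fin p), k < n → ∫ ω, z k j ω ∂μ = 0)
    (hvar : ∀ k (j : Fin p), k < n → ∫ ω, (z k j ω) ^ 2 ∂μ = 1)
    (hm4 : ∀ k (j : Fin p), k < n → ∫ ω, (z k j ω) ^ 4 ∂μ = ν₄)
    (hint4 : ∀ k (j : Fin p), k < n → Integrable (fun ω => (z k j ω) ^ 4) μ)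
    (Sig Sighalf : Matrix (Fin p) (Fin p) ℝ)
    (hSig : Sig.PosSemidef) (hSighalf : Sighalf.PosSemidef)
    (hsqrt : Sighalf * Sighalf = Sig) :
    ∫ ω, ((PaperDefs.sampleCovRV p n Sighalf z ω).trace / p) ^ 2 ∂μ
      = (Sig.trace / p) ^ 2
        + (1 / ((n : ℝ) * p)) * (2 * ((Sig * Sig).trace / p)
            + (ν₄ - 3) * ((PaperDefs.dgn Sig * PaperDefs.dgn Sig).trace / p)) := by
  
  classical
  have hn' : (n:ℝ) ≠ 0 := Nat.cast_ne_zero.mpr hn.ne'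
  have hp' : (p:ℝ) ≠ 0 := Nat.cast_ne_zero.mpr hp.ne'
  have hsymH : ∀ i a : Fin p, Sighalf i a = Sighalf a i := by
    intro i a
    have h := congrFun (congrFun hSighalf.1 a) i
    simpa [Matrix.conjTranspose_apply] using h
  have hsymS : ∀ i a : Fin p, Sig i a = Sig a i := by
    intro i a
    have h := congrFun (congrFun hSig.1 a) i
    simpa [Matrix.conjTranspose_apply] using h
  -- the key scalar statistic
  set T : Ω → ℝ := fun ω => ∑ k ∈ Finset.range n, ∑ ab : Fin p × Fin p,
      Sig ab.1 ab.2 * (z k ab.1 ω * z k ab.2 ω) with hT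
  have key : ∀ ω, (PaperDefs.sampleCovRV p n Sighalf z ω).trace = (n:ℝ)⁻¹ * T ω := by
    intro ω
    rw [PaperDefs.sampleCovRV, PaperDefs.sampleCov, Matrix.trace_smul, smul_eq_mul,
      Matrix.trace_sum, hT]
    congr 1
    refine Finset.sum_congr rfl fun k _ => ?_
    have h1 : (Matrix.vecMulVec (Sighalf.mulVec fun j => z k j ω)
        (Sighalf.mulVec fun j => z k j ω)).trace
        = ∑ i, (Sighalf.mulVec fun j => z k j ω) i * (Sighalf.mulVec fun j => z k j ω) i := by
      simp [Matrix.trace, Matrix.diag, Matrix.vecMulVec_apply]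
    rw [h1]
    calc ∑ i, (Sighalf.mulVec fun j => z k j ω) i * (Sighalf.mulVec fun j => z k j ω) i
        = ∑ i : Fin p, ∑ a : Fin p, ∑ b : Fin p,
            (Sighalf i a * z k a ω) * (Sighalf i b * z k b ω) := by
          refine Finset.sum_congr rfl fun i _ => ?_
          rw [Matrix.mulVec, dotProduct, Finset.sum_mul_sum]
      _ = ∑ a : Fin p, ∑ b : Fin p, ∑ i : Fin p,
            (Sighalf i a * z k a ω) * (Sighalf i b * z k b ω) := by
          rw [Finset.sum_comm]
          exact Finset.sum_congr rfl fun a _ => Finset.sum_comm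
      _ = ∑ a : Fin p, ∑ b : Fin p, Sig a b * (z k a ω * z k b ω) := by
          refine Finset.sum_congr rfl fun a _ => Finset.sum_congr rfl fun b _ => ?_
          have h2 : ∑ i : Fin p, (Sighalf i a * z k a ω) * (Sighalf i b * z k b ω)
              = (∑ i : Fin p, Sighalf a i * Sighalf i b) * (z k a ω * z k b ω) := by
            rw [Finset.sum_mul]
            exact Finset.sum_congr rfl fun i _ => by rw [hsymH i a]; ring
          rw [h2, show (∑ i : Fin p, Sighalf a i * Sighalf i b) = Sig a b from by
            rw [← hsqrt, Matrix.mul_apply]]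
      _ = ∑ ab : Fin p × Fin p, Sig ab.1 ab.2 * (z k ab.1 ω * z k ab.2 ω) := by
          rw [Fintype.sum_prod_type]
  -- mixed fourth moments
  have quadz : ∀ (k k' : ℕ) (hk : k < n) (hk' : k' < n) (a b c d : Fin p),
      ∫ ω, z k a ω * z k b ω * z k' c ω * z k' d ω ∂μ =
        (if a = b then (1:ℝ) else 0) * (if c = d then 1 else 0)
        + (if k = k' ∧ a = c then 1 else 0) * (if k = k' ∧ b = d then 1 else 0)
        + (if k = k' ∧ a = d then 1 else 0) * (if k = k' ∧ b = c then 1 else 0)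
        + (if a = b ∧ (k = k' ∧ a = c) ∧ (k = k' ∧ a = d) then ν₄ - 3 else 0) := by
    intro k k' hk hk' a b c d
    have h := aux_quad (μ := μ) (f := fun e : {m : ℕ // m < n} × Fin p => fun ω => z e.1.1 e.2 ω)
      hindep (fun e => hmeas e.1.1 e.2 e.1.2) (fun e => hmean e.1.1 e.2 e.1.2)
      (fun e => hvar e.1.1 e.2 e.1.2) (fun e => hm4 e.1.1 e.2 e.1.2)
      (⟨k, hk⟩, a) (⟨k, hk⟩, b) (⟨k', hk'⟩, c) (⟨k', hk'⟩, d)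
    simpa [Prod.ext_iff] using h
  have hint_quad : ∀ (k k' : ℕ), k < n → k' < n → ∀ a b c d : Fin p,
      Integrable (fun ω => z k a ω * z k b ω * z k' c ω * z k' d ω) μ :=
    fun k k' hk hk' a b c d =>
      aux_integrable_mul4 (hmeas k a hk) (hmeas k b hk) (hmeas k' c hk') (hmeas k' d hk')
        (hint4 k a hk) (hint4 k b hk) (hint4 k' c hk') (hint4 k' d hk')
  set R := Finset.range n with hR
  have hintg : ∀ (k k' : ℕ), k ∈ R → k' ∈ R → ∀ (ab cd : Fin p × Fin p),
      Integrable (fun ω => Sig ab.1 ab.2 * Sig cd.1 cd.2 *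
        (z k ab.1 ω * z k ab.2 ω * z k' cd.1 ω * z k' cd.2 ω)) μ :=
    fun k k' hk hk' ab cd =>
      (hint_quad k k' (Finset.mem_range.mp hk) (Finset.mem_range.mp hk') ab.1 ab.2 cd.1 cd.2).const_mul _
  have hSS : ∀ ω, T ω * T ω = ∑ k ∈ R, ∑ k' ∈ R, ∑ ab : Fin p × Fin p, ∑ cd : Fin p × Fin p,
      Sig ab.1 ab.2 * Sig cd.1 cd.2 * (z k ab.1 ω * z k ab.2 ω * z k' cd.1 ω * z k' cd.2 ω) := by
    intro ω
    rw [hT]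
    rw [Finset.sum_mul_sum]
    refine Finset.sum_congr rfl fun k _ => Finset.sum_congr rfl fun k' _ => ?_
    rw [Finset.sum_mul_sum]
    exact Finset.sum_congr rfl fun ab _ => Finset.sum_congr rfl fun cd _ => by ring
  have step1 : ∫ ω, T ω * T ω ∂μ
      = ∑ k ∈ R, ∑ k' ∈ R, ∑ ab : Fin p × Fin p, ∑ cd : Fin p × Fin p,
          Sig ab.1 ab.2 * Sig cd.1 cd.2 *
            ∫ ω, z k ab.1 ω * z k ab.2 ω * z k' cd.1 ω * z k' cd.2 ω ∂μ := by
    have h0 : ∫ ω, T ω * T ω ∂μ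
        = ∫ ω, ∑ k ∈ R, ∑ k' ∈ R, ∑ ab : Fin p × Fin p, ∑ cd : Fin p × Fin p,
            Sig ab.1 ab.2 * Sig cd.1 cd.2 *
              (z k ab.1 ω * z k ab.2 ω * z k' cd.1 ω * z k' cd.2 ω) ∂μ := by
      congr 1; funext ω; exact hSS ω
    rw [h0, integral_finset_sum R (fun k hk => integrable_finset_sum R (fun k' hk' =>
      integrable_finset_sum Finset.univ (fun ab _ => integrable_finset_sum Finset.univ
        (fun cd _ => hintg k k' hk hk' ab cd))))]
    refine Finset.sum_congr rfl fun k hk => ?_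
    rw [integral_finset_sum R (fun k' hk' => integrable_finset_sum Finset.univ (fun ab _ =>
      integrable_finset_sum Finset.univ (fun cd _ => hintg k k' hk hk' ab cd)))]
    refine Finset.sum_congr rfl fun k' hk' => ?_
    rw [integral_finset_sum Finset.univ (fun ab _ => integrable_finset_sum Finset.univ
      (fun cd _ => hintg k k' hk hk' ab cd))]
    refine Finset.sum_congr rfl fun ab _ => ?_
    rw [integral_finset_sum Finset.univ (fun cd _ => hintg k k' hk hk' ab cd)]
    refine Finset.sum_congr rfl fun cd _ => ?_
    exact integral_const_mul _ _
  -- algebraic evaluations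
  have hdiagsum : (∑ ab : Fin p × Fin p, Sig ab.1 ab.2 * (if ab.1 = ab.2 then (1:ℝ) else 0))
      = Sig.trace := by
    rw [Fintype.sum_prod_type, Matrix.trace]
    refine Finset.sum_congr rfl fun a _ => ?_
    simp [Matrix.diag, mul_ite, mul_one, mul_zero, Finset.sum_ite_eq]
  have hA1 : (∑ ab : Fin p × Fin p, ∑ cd : Fin p × Fin p, Sig ab.1 ab.2 * Sig cd.1 cd.2 *
      ((if ab.1 = ab.2 then (1:ℝ) else 0) * (if cd.1 = cd.2 then 1 else 0)))
      = Sig.trace ^ 2 := by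
    have h1 : (∑ ab : Fin p × Fin p, ∑ cd : Fin p × Fin p, Sig ab.1 ab.2 * Sig cd.1 cd.2 *
        ((if ab.1 = ab.2 then (1:ℝ) else 0) * (if cd.1 = cd.2 then 1 else 0)))
        = (∑ ab : Fin p × Fin p, Sig ab.1 ab.2 * (if ab.1 = ab.2 then (1:ℝ) else 0))
          * (∑ cd : Fin p × Fin p, Sig cd.1 cd.2 * (if cd.1 = cd.2 then (1:ℝ) else 0)) := by
      rw [Finset.sum_mul_sum]
      exact Finset.sum_congr rfl fun ab _ => Finset.sum_congr rfl fun cd _ => by ring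
    rw [h1, hdiagsum]; ring
  have hA2 : (∑ ab : Fin p × Fin p, ∑ cd : Fin p × Fin p, Sig ab.1 ab.2 * Sig cd.1 cd.2 *
      ((if ab.1 = cd.1 then (1:ℝ) else 0) * (if ab.2 = cd.2 then 1 else 0)))
      = (Sig * Sig).trace := by
    have h1 : ∀ ab : Fin p × Fin p, (∑ cd : Fin p × Fin p, Sig ab.1 ab.2 * Sig cd.1 cd.2 *
        ((if ab.1 = cd.1 then (1:ℝ) else 0) * (if ab.2 = cd.2 then 1 else 0)))
        = Sig ab.1 ab.2 * Sig ab.1 ab.2 := by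
      intro ab
      rw [Fintype.sum_prod_type]
      simp [mul_ite, ite_mul, mul_zero, zero_mul, mul_one, Finset.sum_ite_eq]
    rw [Finset.sum_congr rfl fun ab _ => h1 ab, Fintype.sum_prod_type, Matrix.trace]
    refine Finset.sum_congr rfl fun a _ => ?_
    simp only [Matrix.diag_apply, Matrix.mul_apply]
    exact Finset.sum_congr rfl fun b _ => by rw [hsymS b a]
  have hA3 : (∑ ab : Fin p × Fin p, ∑ cd : Fin p × Fin p, Sig ab.1 ab.2 * Sig cd.1 cd.2 *
      ((if ab.1 = cd.2 then (1:ℝ) else 0) * (if ab.2 = cd.1 then 1 else 0)))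
      = (Sig * Sig).trace := by
    have h1 : ∀ ab : Fin p × Fin p, (∑ cd : Fin p × Fin p, Sig ab.1 ab.2 * Sig cd.1 cd.2 *
        ((if ab.1 = cd.2 then (1:ℝ) else 0) * (if ab.2 = cd.1 then 1 else 0)))
        = Sig ab.1 ab.2 * Sig ab.2 ab.1 := by
      intro ab
      rw [Fintype.sum_prod_type]
      simp [mul_ite, ite_mul, mul_zero, zero_mul, mul_one, Finset.sum_ite_eq]
    rw [Finset.sum_congr rfl fun ab _ => h1 ab, Fintype.sum_prod_type, Matrix.trace]
    refine Finset.sum_congr rfl fun a _ => ?_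
    simp only [Matrix.diag_apply, Matrix.mul_apply]
  have hA4 : (∑ ab : Fin p × Fin p, ∑ cd : Fin p × Fin p, Sig ab.1 ab.2 * Sig cd.1 cd.2 *
      (if ab.1 = ab.2 ∧ ab.1 = cd.1 ∧ ab.1 = cd.2 then ν₄ - 3 else 0))
      = (ν₄ - 3) * ∑ a : Fin p, Sig a a ^ 2 := by
    have h1 : ∀ a b : Fin p, (∑ cd : Fin p × Fin p, Sig a b * Sig cd.1 cd.2 *
        (if a = b ∧ a = cd.1 ∧ a = cd.2 then ν₄ - 3 else 0))
        = if a = b then Sig a a * Sig a a * (ν₄ - 3) else 0 := by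
      intro a b
      by_cases hab : a = b
      · subst hab
        rw [Fintype.sum_prod_type]
        simp [ite_and, mul_ite, ite_mul, mul_zero, zero_mul, Finset.sum_ite_eq]
      · simp [hab]
    calc (∑ ab : Fin p × Fin p, ∑ cd : Fin p × Fin p, Sig ab.1 ab.2 * Sig cd.1 cd.2 *
          (if ab.1 = ab.2 ∧ ab.1 = cd.1 ∧ ab.1 = cd.2 then ν₄ - 3 else 0))
        = ∑ a : Fin p, ∑ b : Fin p, (if a = b then Sig a a * Sig a a * (ν₄ - 3) else 0) := by
          rw [Fintype.sum_prod_type]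
          exact Finset.sum_congr rfl fun a _ => Finset.sum_congr rfl fun b _ => h1 a b
      _ = ∑ a : Fin p, Sig a a * Sig a a * (ν₄ - 3) := by
          refine Finset.sum_congr rfl fun a _ => ?_
          simp [Finset.sum_ite_eq]
      _ = (ν₄ - 3) * ∑ a : Fin p, Sig a a ^ 2 := by
          rw [Finset.mul_sum]
          exact Finset.sum_congr rfl fun a _ => by ring
  have heval : ∀ k ∈ R, ∀ k' ∈ R,
      (∑ ab : Fin p × Fin p, ∑ cd : Fin p × Fin p, Sig ab.1 ab.2 * Sig cd.1 cd.2 *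
        ∫ ω, z k ab.1 ω * z k ab.2 ω * z k' cd.1 ω * z k' cd.2 ω ∂μ)
      = Sig.trace ^ 2 + (if k = k' then
          2 * (Sig * Sig).trace + (ν₄ - 3) * ∑ a : Fin p, Sig a a ^ 2 else 0) := by
    intro k hk k' hk'
    have hkn := Finset.mem_range.mp hk
    have hk'n := Finset.mem_range.mp hk'
    by_cases hkk : k = k'
    · subst hkk
      rw [if_pos rfl]
      have hq : ∀ ab cd : Fin p × Fin p,
          Sig ab.1 ab.2 * Sig cd.1 cd.2 *
              ∫ ω, z k ab.1 ω * z k ab.2 ω * z k cd.1 ω * z k cd.2 ω ∂μ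
          = Sig ab.1 ab.2 * Sig cd.1 cd.2 *
              ((if ab.1 = ab.2 then (1:ℝ) else 0) * (if cd.1 = cd.2 then 1 else 0))
            + Sig ab.1 ab.2 * Sig cd.1 cd.2 *
              ((if ab.1 = cd.1 then (1:ℝ) else 0) * (if ab.2 = cd.2 then 1 else 0))
            + Sig ab.1 ab.2 * Sig cd.1 cd.2 *
              ((if ab.1 = cd.2 then (1:ℝ) else 0) * (if ab.2 = cd.1 then 1 else 0))
            + Sig ab.1 ab.2 * Sig cd.1 cd.2 *
              (if ab.1 = ab.2 ∧ ab.1 = cd.1 ∧ ab.1 = cd.2 then ν₄ - 3 else 0) := by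
        intro ab cd
        rw [quadz k k hkn hkn ab.1 ab.2 cd.1 cd.2]
        simp only [eq_self_iff_true, true_and]
        ring
      rw [Finset.sum_congr rfl fun ab _ => Finset.sum_congr rfl fun cd _ => hq ab cd]
      simp only [Finset.sum_add_distrib]
      rw [hA1, hA2, hA3, hA4]
      ring
    · rw [if_neg hkk, add_zero]
      have hq : ∀ ab cd : Fin p × Fin p,
          Sig ab.1 ab.2 * Sig cd.1 cd.2 *
              ∫ ω, z k ab.1 ω * z k ab.2 ω * z k' cd.1 ω * z k' cd.2 ω ∂μ
          = Sig ab.1 ab.2 * Sig cd.1 cd.2 *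
              ((if ab.1 = ab.2 then (1:ℝ) else 0) * (if cd.1 = cd.2 then 1 else 0)) := by
        intro ab cd
        rw [quadz k k' hkn hk'n ab.1 ab.2 cd.1 cd.2]
        simp [hkk]
      rw [Finset.sum_congr rfl fun ab _ => Finset.sum_congr rfl fun cd _ => hq ab cd, hA1]
  have hfinal : (∑ k ∈ R, ∑ k' ∈ R, (Sig.trace ^ 2 + if k = k' then
      2 * (Sig * Sig).trace + (ν₄ - 3) * ∑ a : Fin p, Sig a a ^ 2 else 0))
      = (n:ℝ)^2 * Sig.trace^2
        + (n:ℝ) * (2 * (Sig * Sig).trace + (ν₄ - 3) * ∑ a : Fin p, Sig a a ^ 2) := by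
    have h1 : (∑ k ∈ R, ∑ k' ∈ R, (Sig.trace ^ 2 + if k = k' then
        2 * (Sig * Sig).trace + (ν₄ - 3) * ∑ a : Fin p, Sig a a ^ 2 else 0))
        = ∑ k ∈ R, ((n:ℝ) * Sig.trace ^ 2
            + (2 * (Sig * Sig).trace + (ν₄ - 3) * ∑ a : Fin p, Sig a a ^ 2)) := by
      refine Finset.sum_congr rfl fun k hk => ?_
      rw [Finset.sum_add_distrib, Finset.sum_const,
        Finset.sum_ite_eq R k
          (fun _ => 2 * (Sig * Sig).trace + (ν₄ - 3) * ∑ a : Fin p, Sig a a ^ 2),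
        if_pos hk, hR, Finset.card_range, nsmul_eq_mul]
    rw [h1, Finset.sum_const, hR, Finset.card_range, nsmul_eq_mul]
    ring
  have hdgn : (PaperDefs.dgn Sig * PaperDefs.dgn Sig).trace = ∑ a : Fin p, Sig a a ^ 2 := by
    rw [PaperDefs.dgn, Matrix.diagonal_mul_diagonal, Matrix.trace_diagonal]
    exact Finset.sum_congr rfl fun a _ => by ring
  have hpt : ∀ ω, ((PaperDefs.sampleCovRV p n Sighalf z ω).trace / p) ^ 2
      = ((n:ℝ)^2 * (p:ℝ)^2)⁻¹ * (T ω * T ω) := by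
    intro ω
    rw [key ω]
    field_simp
  calc ∫ ω, ((PaperDefs.sampleCovRV p n Sighalf z ω).trace / p) ^ 2 ∂μ
      = ∫ ω, ((n:ℝ)^2 * (p:ℝ)^2)⁻¹ * (T ω * T ω) ∂μ := by simp only [hpt]
    _ = ((n:ℝ)^2 * (p:ℝ)^2)⁻¹ * ∫ ω, T ω * T ω ∂μ := integral_const_mul _ _
    _ = ((n:ℝ)^2 * (p:ℝ)^2)⁻¹ * ((n:ℝ)^2 * Sig.trace^2
          + (n:ℝ) * (2 * (Sig * Sig).trace + (ν₄ - 3) * ∑ a : Fin p, Sig a a ^ 2)) := by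
        rw [step1,
          Finset.sum_congr rfl (fun k hk => Finset.sum_congr rfl
            (fun k' hk' => heval k hk k' hk')), hfinal]
    _ = (Sig.trace / p) ^ 2
        + (1 / ((n : ℝ) * p)) * (2 * ((Sig * Sig).trace / p)
            + (ν₄ - 3) * ((PaperDefs.dgn Sig * PaperDefs.dgn Sig).trace / p)) := by
        rw [hdgn]
        field_simp
end

section
/- Let Σ_1, …, Σ_m be p×p real symmetric matrices whose linear span H has dimension d with 1 ≤ d ≤ m, in the space of p×p real symmetric matrices with inner product ⟨A,B⟩ = tr(AB)/p. Let Σ be any p×p real symmetric matrix with orthogonal decomposition Σ = Σ₀ + Σ_⊥, where Σ₀ ∈ H and Σ_⊥ ∈ H^⊥. Then: C(m,d)^{-1} Σ_{J} T(Σ;J) = M^{(d)}·Σ_⊥, and C(m,d)^{-1} Σ_{J} Σ_{k=1}^{d} (−1)^{k+1} C_k(Σ;J)·Σ_{i_k} = M^{(d)}·Σ₀, where both sums run over all d-element subsets J = {i_1 < ⋯ < i_d} of {1,…,m}. -/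
open Matrix MeasureTheory ProbabilityTheory Filter Finset

section Statement13Aux

namespace Statement13Aux

open Matrix Finset

lemma symm_of_mem_span {p m : ℕ} {Sig : ℕ → Matrix (Fin p) (Fin p) ℝ}
    (hsymm : ∀ i, i < m → (Sig i).IsSymm) {X : Matrix (Fin p) (Fin p) ℝ}
    (hX : X ∈ Submodule.span ℝ (Sig '' Set.Iio m)) : X.IsSymm := by
  induction hX using Submodule.span_induction with
  | mem x hx => obtain ⟨i, hi, rfl⟩ := hx; exact hsymm i hi
  | zero => exact Matrix.isSymm_zero
  | add x y hx hy ihx ihy => exact ihx.add ihy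
  | smul a x hx ihx => exact ihx.smul a

lemma eq_zero_of_trace_sq {p : ℕ} (T : Matrix (Fin p) (Fin p) ℝ) (hT : T.IsSymm)
    (h : (T * T).trace = 0) : T = 0 := by
  have key : ∑ i : Fin p, ∑ j : Fin p, T i j * T i j = 0 := by
    rw [← h]
    simp only [Matrix.trace, Matrix.diag, Matrix.mul_apply]
    refine (Finset.sum_congr rfl fun i _ => Finset.sum_congr rfl fun j _ => ?_).symm
    rw [hT.apply]
  have h1 := (Finset.sum_eq_zero_iff_of_nonneg (fun i _ =>
    Finset.sum_nonneg fun j _ => mul_self_nonneg _)).mp key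
  ext i j
  have h2 := (Finset.sum_eq_zero_iff_of_nonneg (fun j _ => mul_self_nonneg (T i j))).mp
    (h1 i (Finset.mem_univ i)) j (Finset.mem_univ j)
  simpa using mul_self_eq_zero.mp h2

lemma sum_mul_trace {p d : ℕ} (c : Fin d → ℝ) (V : Fin d → Matrix (Fin p) (Fin p) ℝ)
    (X : Matrix (Fin p) (Fin p) ℝ) :
    ∑ r, c r * ((V r * X).trace / p) = ((∑ r, c r • V r) * X).trace / p := by
  rw [Matrix.sum_mul, Matrix.trace_sum, Finset.sum_div]
  refine Finset.sum_congr rfl fun r _ => ?_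
  rw [Matrix.smul_mul, Matrix.trace_smul, smul_eq_mul, mul_div_assoc]

lemma key_T_eq_zero (p d : ℕ) (hp : 0 < p) (V : Fin d → Matrix (Fin p) (Fin p) ℝ)
    (hVs : ∀ l, (V l).IsSymm) (A0 : Matrix (Fin p) (Fin p) ℝ) (hA0s : A0.IsSymm)
    (hA0 : A0 ∈ Submodule.span ℝ (Set.range V) ∨ ¬ LinearIndependent ℝ V) :
    ∑ k : Fin (d + 1),
      ((-1 : ℝ) ^ (k : ℕ) *
        Matrix.det (Matrix.of fun r t : Fin d =>
          (V r * (Fin.cons A0 V : Fin (d + 1) → _) (k.succAbove t)).trace / p)) •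
        (Fin.cons A0 V : Fin (d + 1) → _) k = 0 := by
  classical
  set B : Fin (d + 1) → Matrix (Fin p) (Fin p) ℝ := Fin.cons A0 V with hB
  rcases hA0 with hmem | hdep
  · set T : Matrix (Fin p) (Fin p) ℝ := ∑ k : Fin (d + 1),
      ((-1 : ℝ) ^ (k : ℕ) *
        Matrix.det (Matrix.of fun r t : Fin d => (V r * B (k.succAbove t)).trace / p)) • B k
      with hT
    show T = 0
    have hBs : ∀ k, (B k).IsSymm := by
      intro k
      refine Fin.cases ?_ ?_ k
      · simpa [hB] using hA0s
      · intro l; simpa [hB] using hVs l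
    have hBmem : ∀ k, B k ∈ Submodule.span ℝ (Set.range V) := by
      intro k
      refine Fin.cases ?_ ?_ k
      · simpa [hB] using hmem
      · intro l
        simpa [hB] using Submodule.subset_span (Set.mem_range_self l)
    have hTs : T.IsSymm := by
      show Tᵀ = T
      rw [hT, Matrix.transpose_sum]
      exact Finset.sum_congr rfl fun k _ => by rw [Matrix.transpose_smul, hBs k]
    have hTmem : T ∈ Submodule.span ℝ (Set.range V) :=
      Submodule.sum_mem _ fun k _ => Submodule.smul_mem _ _ (hBmem k)
    have horth : ∀ r : Fin d, (V r * T).trace / p = 0 := by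
      intro r
      set M' : Matrix (Fin (d + 1)) (Fin (d + 1)) ℝ :=
        Matrix.of fun s t => ((Fin.cons (V r) V : Fin (d + 1) → _) s * B t).trace / p with hM'
      have hrow : M' 0 = M' r.succ := by
        ext t; simp [hM', Fin.cons_zero, Fin.cons_succ]
      have hdet0 : M'.det = 0 := Matrix.det_zero_of_row_eq (Fin.succ_ne_zero r).symm hrow
      have hsub : ∀ k : Fin (d + 1), M'.submatrix Fin.succ k.succAbove =
          Matrix.of fun r' t' : Fin d => (V r' * B (k.succAbove t')).trace / p := by
        intro k; ext r' t'
        simp [hM', Matrix.submatrix_apply, Fin.cons_succ]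
      have hexp := Matrix.det_succ_row_zero M'
      rw [hdet0] at hexp
      have hcalc : (V r * T).trace / p = ∑ k : Fin (d + 1),
          ((-1 : ℝ) ^ (k : ℕ) *
            Matrix.det (Matrix.of fun r' t' : Fin d => (V r' * B (k.succAbove t')).trace / p)) *
            ((V r * B k).trace / p) := by
        rw [hT, Matrix.mul_sum, Matrix.trace_sum, Finset.sum_div]
        refine Finset.sum_congr rfl fun k _ => ?_
        rw [Matrix.mul_smul, Matrix.trace_smul, smul_eq_mul, mul_div_assoc]
      rw [hcalc]
      refine Eq.trans (Finset.sum_congr rfl fun k _ => ?_) hexp.symm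
      rw [hsub k]
      have : M' 0 k = (V r * B k).trace / p := by simp [hM', Fin.cons_zero]
      rw [this]; ring
    have hall : ∀ X, X ∈ Submodule.span ℝ (Set.range V) → (X * T).trace / p = 0 := by
      intro X hX
      induction hX using Submodule.span_induction with
      | mem x hx => obtain ⟨r, rfl⟩ := hx; exact horth r
      | zero => simp
      | add x y hx hy ihx ihy => rw [Matrix.add_mul, Matrix.trace_add, add_div, ihx, ihy, add_zero]
      | smul a x hx ihx =>
          rw [Matrix.smul_mul, Matrix.trace_smul, smul_eq_mul, mul_div_assoc, ihx, mul_zero]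
    have htr : (T * T).trace = 0 := by
      have := hall T hTmem
      have hp' : (p : ℝ) ≠ 0 := Nat.cast_ne_zero.mpr hp.ne'
      field_simp at this
      simpa using this
    exact eq_zero_of_trace_sq T hTs htr
  · obtain ⟨c, hc0, l0, hl0⟩ := Fintype.not_linearIndependent_iff.mp hdep
    have hdet : ∀ k : Fin (d + 1),
        Matrix.det (Matrix.of fun r t : Fin d => (V r * B (k.succAbove t)).trace / p) = 0 := by
      intro k
      refine Matrix.exists_vecMul_eq_zero_iff.mp ⟨c, ?_, ?_⟩
      · intro hcz; exact hl0 (by simp [hcz])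
      · ext t
        simp only [Matrix.vecMul, dotProduct, Matrix.of_apply, Pi.zero_apply]
        rw [sum_mul_trace c V, hc0, Matrix.zero_mul, Matrix.trace_zero, zero_div]
    refine Finset.sum_eq_zero fun k _ => ?_
    rw [hdet k, mul_zero, zero_smul]

lemma detRow_eq {p d : ℕ} (Sig : ℕ → Matrix (Fin p) (Fin p) ℝ)
    (top : Matrix (Fin p) (Fin p) ℝ) (J : Finset ℕ) (h : J.card = d) :
    PaperDefs.detRow p d Sig top J =
      ∑ k : Fin (d + 1),
        ((-1 : ℝ) ^ (k : ℕ) *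
          Matrix.det (Matrix.of fun r t : Fin d =>
            (Sig (J.orderEmbOfFin h r) *
              (Fin.cons top (fun l => Sig (J.orderEmbOfFin h l)) :
                Fin (d + 1) → Matrix (Fin p) (Fin p) ℝ) (k.succAbove t)).trace / p)) •
          (Fin.cons top (fun l => Sig (J.orderEmbOfFin h l)) :
            Fin (d + 1) → Matrix (Fin p) (Fin p) ℝ) k := by
  rw [PaperDefs.detRow, dif_pos h]

lemma detRow0_eq {p d : ℕ} (Sig : ℕ → Matrix (Fin p) (Fin p) ℝ)
    (top : Matrix (Fin p) (Fin p) ℝ) (J : Finset ℕ) (h : J.card = d) :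
    PaperDefs.detRow0 p d Sig top J =
      ∑ k : Fin d,
        ((-1 : ℝ) ^ (((k : ℕ) + 1) + 1) *
          Matrix.det (Matrix.of fun r t : Fin d =>
            (Sig (J.orderEmbOfFin h r) *
              (Fin.cons top (fun l => Sig (J.orderEmbOfFin h l)) :
                Fin (d + 1) → Matrix (Fin p) (Fin p) ℝ)
                ((k.succ : Fin (d + 1)).succAbove t)).trace / p)) •
          Sig (J.orderEmbOfFin h k) := by
  rw [PaperDefs.detRow0, dif_pos h]

end Statement13Aux

end Statement13Aux

namespace Statement13Aux

open Matrix Finset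

lemma detRow_A0_zero (p m d : ℕ) (hp : 0 < p) (Sig : ℕ → Matrix (Fin p) (Fin p) ℝ)
    (hsymm : ∀ i, i < m → (Sig i).IsSymm)
    (hdim : Module.finrank ℝ (Submodule.span ℝ (Sig '' Set.Iio m)) = d)
    (A0 : Matrix (Fin p) (Fin p) ℝ) (hA0 : A0 ∈ Submodule.span ℝ (Sig '' Set.Iio m))
    (J : Finset ℕ) (hJm : J ⊆ Finset.range m) (h : J.card = d) :
    PaperDefs.detRow p d Sig A0 J = 0 := by
  have hjm : ∀ l : Fin d, J.orderEmbOfFin h l < m := fun l =>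
    Finset.mem_range.mp (hJm (J.orderEmbOfFin_mem h l))
  have hVmem : ∀ l : Fin d, Sig (J.orderEmbOfFin h l) ∈ Submodule.span ℝ (Sig '' Set.Iio m) :=
    fun l => Submodule.subset_span ⟨_, hjm l, rfl⟩
  have hVs : ∀ l : Fin d, (Sig (J.orderEmbOfFin h l)).IsSymm := fun l => hsymm _ (hjm l)
  have hA0s : A0.IsSymm := symm_of_mem_span hsymm hA0
  rw [detRow_eq Sig A0 J h]
  refine key_T_eq_zero p d hp (fun l => Sig (J.orderEmbOfFin h l)) hVs A0 hA0s ?_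
  by_cases hind : LinearIndependent ℝ (fun l : Fin d => Sig (J.orderEmbOfFin h l))
  · left
    have hle : Submodule.span ℝ (Set.range fun l : Fin d => Sig (J.orderEmbOfFin h l)) ≤
        Submodule.span ℝ (Sig '' Set.Iio m) :=
      Submodule.span_le.mpr (Set.range_subset_iff.mpr hVmem)
    have heq := Submodule.eq_of_le_of_finrank_le hle ?_
    · rw [heq]; exact hA0
    · rw [hdim, finrank_span_eq_card hind, Fintype.card_fin]
  · right; exact hind

lemma detRow_apply (p m d : ℕ) (hp : 0 < p) (Sig : ℕ → Matrix (Fin p) (Fin p) ℝ)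
    (hsymm : ∀ i, i < m → (Sig i).IsSymm)
    (hdim : Module.finrank ℝ (Submodule.span ℝ (Sig '' Set.Iio m)) = d)
    (A A0 Aperp : Matrix (Fin p) (Fin p) ℝ)
    (hA0 : A0 ∈ Submodule.span ℝ (Sig '' Set.Iio m))
    (hperp : ∀ B ∈ Submodule.span ℝ (Sig '' Set.Iio m), (Aperp * B).trace / p = 0)
    (hdecomp : A = A0 + Aperp)
    (J : Finset ℕ) (hJm : J ⊆ Finset.range m) (h : J.card = d) :
    PaperDefs.detRow p d Sig A J =
      (Matrix.det (Matrix.of fun r t : Fin d =>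
        (Sig (J.orderEmbOfFin h r) * Sig (J.orderEmbOfFin h t)).trace / p)) • Aperp := by
  have hjm : ∀ l : Fin d, J.orderEmbOfFin h l < m := fun l =>
    Finset.mem_range.mp (hJm (J.orderEmbOfFin_mem h l))
  have hVmem : ∀ l : Fin d, Sig (J.orderEmbOfFin h l) ∈ Submodule.span ℝ (Sig '' Set.Iio m) :=
    fun l => Submodule.subset_span ⟨_, hjm l, rfl⟩
  have htr0 : ∀ r : Fin d, (Sig (J.orderEmbOfFin h r) * Aperp).trace / p = 0 := by
    intro r
    rw [Matrix.trace_mul_comm]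
    exact hperp _ (hVmem r)
  have hz := detRow_A0_zero p m d hp Sig hsymm hdim A0 hA0 J hJm h
  rw [detRow_eq Sig A0 J h] at hz
  rw [detRow_eq Sig A J h]
  have hBeq : ∀ r : Fin d, ∀ u : Fin (d + 1),
      (Sig (J.orderEmbOfFin h r) *
        (Fin.cons A (fun l => Sig (J.orderEmbOfFin h l)) :
          Fin (d + 1) → Matrix (Fin p) (Fin p) ℝ) u).trace / p =
      (Sig (J.orderEmbOfFin h r) *
        (Fin.cons A0 (fun l => Sig (J.orderEmbOfFin h l)) :
          Fin (d + 1) → Matrix (Fin p) (Fin p) ℝ) u).trace / p := by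
    intro r u
    refine Fin.cases ?_ (fun l => ?_) u
    · simp only [Fin.cons_zero]
      rw [hdecomp, Matrix.mul_add, Matrix.trace_add, add_div, htr0 r, add_zero]
    · simp only [Fin.cons_succ]
  have hmx : ∀ k : Fin (d + 1),
      (Matrix.of fun r t : Fin d =>
        (Sig (J.orderEmbOfFin h r) *
          (Fin.cons A (fun l => Sig (J.orderEmbOfFin h l)) :
            Fin (d + 1) → Matrix (Fin p) (Fin p) ℝ) (k.succAbove t)).trace / p) =
      (Matrix.of fun r t : Fin d =>
        (Sig (J.orderEmbOfFin h r) *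
          (Fin.cons A0 (fun l => Sig (J.orderEmbOfFin h l)) :
            Fin (d + 1) → Matrix (Fin p) (Fin p) ℝ) (k.succAbove t)).trace / p) := by
    intro k; ext r t; exact hBeq r _
  have step1 : (∑ k : Fin (d + 1),
      ((-1 : ℝ) ^ (k : ℕ) * Matrix.det (Matrix.of fun r t : Fin d =>
        (Sig (J.orderEmbOfFin h r) *
          (Fin.cons A (fun l => Sig (J.orderEmbOfFin h l)) :
            Fin (d + 1) → Matrix (Fin p) (Fin p) ℝ) (k.succAbove t)).trace / p)) •
        (Fin.cons A (fun l => Sig (J.orderEmbOfFin h l)) :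
          Fin (d + 1) → Matrix (Fin p) (Fin p) ℝ) k) =
      ∑ k : Fin (d + 1),
      ((-1 : ℝ) ^ (k : ℕ) * Matrix.det (Matrix.of fun r t : Fin d =>
        (Sig (J.orderEmbOfFin h r) *
          (Fin.cons A0 (fun l => Sig (J.orderEmbOfFin h l)) :
            Fin (d + 1) → Matrix (Fin p) (Fin p) ℝ) (k.succAbove t)).trace / p)) •
        (Fin.cons A (fun l => Sig (J.orderEmbOfFin h l)) :
          Fin (d + 1) → Matrix (Fin p) (Fin p) ℝ) k :=
    Finset.sum_congr rfl fun k _ => by rw [hmx k]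
  rw [step1]
  have step2 : ∀ (C : Fin (d + 1) → ℝ),
      (∑ k : Fin (d + 1), C k •
        (Fin.cons A (fun l => Sig (J.orderEmbOfFin h l)) :
          Fin (d + 1) → Matrix (Fin p) (Fin p) ℝ) k) =
      (∑ k : Fin (d + 1), C k •
        (Fin.cons A0 (fun l => Sig (J.orderEmbOfFin h l)) :
          Fin (d + 1) → Matrix (Fin p) (Fin p) ℝ) k) + C 0 • Aperp := by
    intro C
    rw [Fin.sum_univ_succ, Fin.sum_univ_succ]
    simp only [Fin.cons_zero, Fin.cons_succ]
    rw [hdecomp, smul_add]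
    abel
  rw [step2, hz, zero_add]
  have hM0 : (Matrix.of fun r t : Fin d =>
      (Sig (J.orderEmbOfFin h r) *
        (Fin.cons A0 (fun l => Sig (J.orderEmbOfFin h l)) :
          Fin (d + 1) → Matrix (Fin p) (Fin p) ℝ) ((0 : Fin (d + 1)).succAbove t)).trace / p) =
      Matrix.of fun r t : Fin d =>
        (Sig (J.orderEmbOfFin h r) * Sig (J.orderEmbOfFin h t)).trace / p := by
    ext r t; simp [Fin.zero_succAbove, Fin.cons_succ]
  rw [hM0]
  norm_num

end Statement13Aux

namespace Statement13Aux

open Matrix Finset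

lemma detRow0_apply (p m d : ℕ) (hp : 0 < p) (Sig : ℕ → Matrix (Fin p) (Fin p) ℝ)
    (hsymm : ∀ i, i < m → (Sig i).IsSymm)
    (hdim : Module.finrank ℝ (Submodule.span ℝ (Sig '' Set.Iio m)) = d)
    (A A0 Aperp : Matrix (Fin p) (Fin p) ℝ)
    (hA0 : A0 ∈ Submodule.span ℝ (Sig '' Set.Iio m))
    (hperp : ∀ B ∈ Submodule.span ℝ (Sig '' Set.Iio m), (Aperp * B).trace / p = 0)
    (hdecomp : A = A0 + Aperp)
    (J : Finset ℕ) (hJm : J ⊆ Finset.range m) (h : J.card = d) :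
    PaperDefs.detRow0 p d Sig A J =
      (Matrix.det (Matrix.of fun r t : Fin d =>
        (Sig (J.orderEmbOfFin h r) * Sig (J.orderEmbOfFin h t)).trace / p)) • A0 := by
  have hsum : PaperDefs.detRow p d Sig A J + PaperDefs.detRow0 p d Sig A J =
      (Matrix.det (Matrix.of fun r t : Fin d =>
        (Sig (J.orderEmbOfFin h r) * Sig (J.orderEmbOfFin h t)).trace / p)) • A := by
    rw [detRow_eq Sig A J h, detRow0_eq Sig A J h, Fin.sum_univ_succ, add_assoc,
      ← Finset.sum_add_distrib]
    have hzero : (∑ l : Fin d,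
        (((-1 : ℝ) ^ ((l.succ : Fin (d + 1)) : ℕ) *
          Matrix.det (Matrix.of fun r t : Fin d =>
            (Sig (J.orderEmbOfFin h r) *
              (Fin.cons A (fun l' => Sig (J.orderEmbOfFin h l')) :
                Fin (d + 1) → Matrix (Fin p) (Fin p) ℝ)
                ((l.succ : Fin (d + 1)).succAbove t)).trace / p)) •
          (Fin.cons A (fun l' => Sig (J.orderEmbOfFin h l')) :
            Fin (d + 1) → Matrix (Fin p) (Fin p) ℝ) l.succ +
        ((-1 : ℝ) ^ (((l : ℕ) + 1) + 1) *
          Matrix.det (Matrix.of fun r t : Fin d =>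
            (Sig (J.orderEmbOfFin h r) *
              (Fin.cons A (fun l' => Sig (J.orderEmbOfFin h l')) :
                Fin (d + 1) → Matrix (Fin p) (Fin p) ℝ)
                ((l.succ : Fin (d + 1)).succAbove t)).trace / p)) •
          Sig (J.orderEmbOfFin h l))) = 0 := by
      refine Finset.sum_eq_zero fun l _ => ?_
      simp only [Fin.cons_succ, Fin.val_succ]
      rw [← add_smul]
      have : ((-1 : ℝ) ^ ((l : ℕ) + 1) *
          Matrix.det (Matrix.of fun r t : Fin d =>
            (Sig (J.orderEmbOfFin h r) *
              (Fin.cons A (fun l' => Sig (J.orderEmbOfFin h l')) :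
                Fin (d + 1) → Matrix (Fin p) (Fin p) ℝ)
                ((l.succ : Fin (d + 1)).succAbove t)).trace / p) +
          (-1 : ℝ) ^ (((l : ℕ) + 1) + 1) *
          Matrix.det (Matrix.of fun r t : Fin d =>
            (Sig (J.orderEmbOfFin h r) *
              (Fin.cons A (fun l' => Sig (J.orderEmbOfFin h l')) :
                Fin (d + 1) → Matrix (Fin p) (Fin p) ℝ)
                ((l.succ : Fin (d + 1)).succAbove t)).trace / p)) = 0 := by ring
      rw [this, zero_smul]
    rw [hzero, add_zero]
    have hM0 : (Matrix.of fun r t : Fin d =>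
        (Sig (J.orderEmbOfFin h r) *
          (Fin.cons A (fun l => Sig (J.orderEmbOfFin h l)) :
            Fin (d + 1) → Matrix (Fin p) (Fin p) ℝ) ((0 : Fin (d + 1)).succAbove t)).trace / p) =
        Matrix.of fun r t : Fin d =>
          (Sig (J.orderEmbOfFin h r) * Sig (J.orderEmbOfFin h t)).trace / p := by
      ext r t; simp [Fin.zero_succAbove, Fin.cons_succ]
    rw [hM0]
    simp [Fin.cons_zero]
  have h1 := detRow_apply p m d hp Sig hsymm hdim A A0 Aperp hA0 hperp hdecomp J hJm h
  have h2 : PaperDefs.detRow0 p d Sig A J =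
      (Matrix.det (Matrix.of fun r t : Fin d =>
        (Sig (J.orderEmbOfFin h r) * Sig (J.orderEmbOfFin h t)).trace / p)) • A -
      PaperDefs.detRow p d Sig A J := by
    rw [← hsum]; abel
  rw [h2, h1, hdecomp, smul_add]
  abel

lemma subdet_gram_eq (p d : ℕ) (Sig : ℕ → Matrix (Fin p) (Fin p) ℝ)
    (J : Finset ℕ) (h : J.card = d) :
    PaperDefs.subdet (PaperDefs.gramG p Sig) J =
      Matrix.det (Matrix.of fun r t : Fin d =>
        (Sig (J.orderEmbOfFin h r) * Sig (J.orderEmbOfFin h t)).trace / p) := by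
  rw [PaperDefs.subdet, ← Matrix.det_submatrix_equiv_self (J.orderIsoOfFin h).toEquiv]
  congr 1

end Statement13Aux

/-- Lemma 2.3, orthogonal decomposition. In the space of `p×p` real
symmetric matrices with inner product `⟨A,B⟩ = tr(AB)/p`, if `Σ = Σ₀ + Σ_⊥` is the orthogonal
decomposition of `Σ` w.r.t. the span `H` of `Σ_1,…,Σ_m` (of dimension `d`), then the average
over `d`-subsets `J` of the matrix determinants `T(Σ;J)` equals `M^{(d)}·Σ_⊥`, and the
average of `∑_{k=1}^d (−1)^{k+1} C_k(Σ;J)·Σ_{i_k}` equals `M^{(d)}·Σ₀`. -/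
theorem statement13 (p m d : ℕ) (hp : 0 < p) (hd1 : 1 ≤ d) (hdm : d ≤ m)
    (Sig : ℕ → Matrix (Fin p) (Fin p) ℝ)
    (hsymm : ∀ i, i < m → (Sig i).IsSymm)
    (hdim : Module.finrank ℝ (Submodule.span ℝ (Sig '' Set.Iio m)) = d)
    (A A0 Aperp : Matrix (Fin p) (Fin p) ℝ)
    (hAsymm : A.IsSymm)
    (hA0 : A0 ∈ Submodule.span ℝ (Sig '' Set.Iio m))
    (hperp : ∀ B ∈ Submodule.span ℝ (Sig '' Set.Iio m), (Aperp * B).trace / p = 0)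
    (hdecomp : A = A0 + Aperp) :
    ((m.choose d : ℝ))⁻¹ •
        (∑ J ∈ (Finset.range m).powersetCard d, PaperDefs.detRow p d Sig A J)
      = (PaperDefs.Mavg (PaperDefs.gramG p Sig) m d) • Aperp ∧
    ((m.choose d : ℝ))⁻¹ •
        (∑ J ∈ (Finset.range m).powersetCard d, PaperDefs.detRow0 p d Sig A J)
      = (PaperDefs.Mavg (PaperDefs.gramG p Sig) m d) • A0 := by
  have key : ∀ (X : Matrix (Fin p) (Fin p) ℝ)
      (F : Finset ℕ → Matrix (Fin p) (Fin p) ℝ),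
      (∀ J, J ⊆ Finset.range m → ∀ h : J.card = d,
        F J = (Matrix.det (Matrix.of fun r t : Fin d =>
          (Sig (J.orderEmbOfFin h r) * Sig (J.orderEmbOfFin h t)).trace / p)) • X) →
      ((m.choose d : ℝ))⁻¹ • (∑ J ∈ (Finset.range m).powersetCard d, F J)
        = (PaperDefs.Mavg (PaperDefs.gramG p Sig) m d) • X := by
    intro X F hF
    have h1 : (∑ J ∈ (Finset.range m).powersetCard d, F J) =
        (∑ J ∈ (Finset.range m).powersetCard d,
          PaperDefs.subdet (PaperDefs.gramG p Sig) J) • X := by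
      rw [Finset.sum_smul]
      refine Finset.sum_congr rfl fun J hJ => ?_
      obtain ⟨hJm, hJc⟩ := Finset.mem_powersetCard.mp hJ
      rw [hF J hJm hJc, Statement13Aux.subdet_gram_eq p d Sig J hJc]
    rw [h1, smul_smul, PaperDefs.Mavg]
  constructor
  · exact key Aperp _ fun J hJm h =>
      Statement13Aux.detRow_apply p m d hp Sig hsymm hdim A A0 Aperp hA0 hperp hdecomp J hJm h
  · exact key A0 _ fun J hJm h =>
      Statement13Aux.detRow0_apply p m d hp Sig hsymm hdim A A0 Aperp hA0 hperp hdecomp J hJm h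
end

section
/- Let Σ_1, …, Σ_m be p×p real symmetric matrices whose linear span H has dimension d with 1 ≤ d ≤ m, in the space of p×p real symmetric matrices with inner product ⟨A,B⟩ = tr(AB)/p. Let Σ be any p×p real symmetric matrix with orthogonal decomposition Σ = Σ₀ + Σ_⊥, Σ₀ ∈ H, Σ_⊥ ∈ H^⊥. Define M^{(d)}(Σ) = C(m,d)^{-1} Σ_{J} det of the (d+1)×(d+1) Gram matrix of (Σ, Σ_{i_1},…,Σ_{i_d}), where the sum runs over all d-element subsets J = {i_1<⋯<i_d} of {1,…,m}. Then M^{(d)}(Σ) = M^{(d)}·⟨Σ_⊥, Σ_⊥⟩. -/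
open Matrix MeasureTheory ProbabilityTheory Filter Finset

theorem aux_main14 (p m d : ℕ)
    (Sig : ℕ → Matrix (Fin p) (Fin p) ℝ)
    (hdim : Module.finrank ℝ (Submodule.span ℝ (Sig '' Set.Iio m)) = d)
    (A A0 Aperp : Matrix (Fin p) (Fin p) ℝ)
    (hA0 : A0 ∈ Submodule.span ℝ (Sig '' Set.Iio m))
    (hperp : ∀ B ∈ Submodule.span ℝ (Sig '' Set.Iio m), (Aperp * B).trace / p = 0)
    (hdecomp : A = A0 + Aperp)
    (J : Finset ℕ) (hJm : J ⊆ Finset.range m) (h : J.card = d) :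
    PaperDefs.gramDetExt p d Sig A J
      = PaperDefs.subdet (PaperDefs.gramG p Sig) J * ((Aperp * Aperp).trace / p) := by
  set j := J.orderEmbOfFin h with hj
  set v : Fin d → Matrix (Fin p) (Fin p) ℝ := fun l => Sig (j l) with hv
  have hvH : ∀ l, v l ∈ Submodule.span ℝ (Sig '' Set.Iio m) := by
    intro l
    apply Submodule.subset_span
    refine ⟨j l, ?_, rfl⟩
    have := J.orderEmbOfFin_mem h l
    exact Finset.mem_range.mp (hJm this)
  set B : Fin (d + 1) → Matrix (Fin p) (Fin p) ℝ := Fin.cons A v with hB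
  have hGDE : PaperDefs.gramDetExt p d Sig A J
      = Matrix.det (Matrix.of fun r s : Fin (d + 1) => (B r * B s).trace / p) := by
    rw [PaperDefs.gramDetExt, dif_pos h]
  have hsub : PaperDefs.subdet (PaperDefs.gramG p Sig) J
      = Matrix.det (Matrix.of fun r s : Fin d => ((v r * v s).trace / p)) := by
    rw [PaperDefs.subdet]
    rw [← Matrix.det_submatrix_equiv_self (J.orderIsoOfFin h).toEquiv]
    have hms : (Matrix.of fun i j : J => PaperDefs.gramG p Sig i.1 j.1).submatrix
        (J.orderIsoOfFin h).toEquiv (J.orderIsoOfFin h).toEquiv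
        = Matrix.of fun r s : Fin d => ((v r * v s).trace / p) := by
      ext r s
      simp [PaperDefs.gramG, hv, hj, Finset.coe_orderIsoOfFin_apply]
    rw [hms]
  by_cases hLI : LinearIndependent ℝ v
  · -- independent case
    have hspan : Submodule.span ℝ (Set.range v) = Submodule.span ℝ (Sig '' Set.Iio m) := by
      apply Submodule.eq_of_le_of_finrank_le
      · rw [Submodule.span_le]
        rintro _ ⟨l, rfl⟩
        exact hvH l
      · rw [hdim, finrank_span_eq_card hLI, Fintype.card_fin]
    obtain ⟨c, hc⟩ : ∃ c : Fin d → ℝ, ∑ l, c l • v l = A0 := by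
      have : A0 ∈ Submodule.span ℝ (Set.range v) := hspan ▸ hA0
      exact (Submodule.mem_span_range_iff_exists_fun ℝ).mp this
    set G : Matrix (Fin (d+1)) (Fin (d+1)) ℝ :=
      Matrix.of fun r s => (B r * B s).trace / p with hG
    set B' : Fin (d + 1) → Matrix (Fin p) (Fin p) ℝ := Fin.cons Aperp v with hB'
    set G' : Matrix (Fin (d+1)) (Fin (d+1)) ℝ :=
      Matrix.of fun r s => (B' r * B s).trace / p with hG'
    have hA : A = Aperp + ∑ l, c l • v l := by rw [hc, hdecomp, add_comm]
    set c' : Fin (d+1) → ℝ := Fin.cons 0 c with hc'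
    have hGeq : G = G'.updateRow 0 (G' 0 + ∑ k, c' k • G' k) := by
      ext r s
      rcases Fin.eq_zero_or_eq_succ r with hr | ⟨l, rfl⟩
      · subst hr
        rw [Matrix.updateRow_self]
        have : ∀ s, (∑ k, c' k • G' k) s = ∑ l : Fin d, c l * ((v l * B s).trace / p) := by
          intro s
          simp only [Finset.sum_apply, Pi.smul_apply, smul_eq_mul]
          rw [Fin.sum_univ_succ]
          simp [hc', hG', hB', Fin.cons_succ, hv]
        simp only [Pi.add_apply, this]
        show (B 0 * B s).trace / p = (B' 0 * B s).trace / p + _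
        rw [hB, hB']
        simp only [Fin.cons_zero]
        rw [hA]
        rw [add_mul, Matrix.sum_mul]
        simp only [Matrix.smul_mul]
        rw [Matrix.trace_add, Matrix.trace_sum]
        simp only [Matrix.trace_smul, smul_eq_mul]
        rw [add_div, Finset.sum_div]
        simp [mul_div_assoc]
      · rw [Matrix.updateRow_ne (Fin.succ_ne_zero l)]
        simp [hG, hG', hB, hB', Fin.cons_succ]
    rw [hGDE, hGeq, Matrix.det_updateRow_add]
    rw [Matrix.updateRow_eq_self, Matrix.det_updateRow_sum]
    have hc'0 : c' 0 = 0 := rfl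
    rw [hc'0, zero_smul, add_zero]
    -- now compute det G'
    have hrow0 : ∀ t : Fin d, G' 0 t.succ = 0 := by
      intro t
      show (B' 0 * B t.succ).trace / p = 0
      rw [hB, hB']
      simp only [Fin.cons_zero, Fin.cons_succ]
      exact hperp _ (hvH t)
    have h00 : G' 0 0 = (Aperp * Aperp).trace / p := by
      show (B' 0 * B 0).trace / p = _
      rw [hB, hB']
      simp only [Fin.cons_zero]
      rw [hdecomp, mul_add, Matrix.trace_add, add_div]
      rw [hperp _ hA0, zero_add]
    rw [Matrix.det_succ_row_zero, Fin.sum_univ_succ]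
    have hz : ∀ t : Fin d, ((-1:ℝ))^((t.succ : Fin (d+1)) : ℕ) * G' 0 t.succ *
        (G'.submatrix Fin.succ (Fin.succAbove t.succ)).det = 0 := by
      intro t; rw [hrow0 t]; ring
    rw [Finset.sum_congr rfl (fun t _ => hz t), Finset.sum_const_zero, add_zero]
    rw [h00, hsub]
    have hmat : G'.submatrix Fin.succ (Fin.succAbove 0)
        = Matrix.of fun r s : Fin d => ((v r * v s).trace / p) := by
      ext r s
      simp only [Matrix.submatrix_apply, Fin.zero_succAbove]
      show (B' r.succ * B s.succ).trace / p = _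
      rw [hB, hB']
      simp [Fin.cons_succ]
    rw [hmat]
    simp [mul_comm]
  · -- dependent case: both sides are zero
    obtain ⟨g, hg, i, hgi⟩ := Fintype.not_linearIndependent_iff.mp hLI
    have key : ∀ X : Matrix (Fin p) (Fin p) ℝ,
        ∑ r, g r * ((v r * X).trace / p) = 0 := by
      intro X
      have : ∑ r, g r * ((v r * X).trace / p)
          = ((∑ r, g r • v r) * X).trace / p := by
        rw [Matrix.sum_mul]
        simp only [Matrix.smul_mul]
        rw [Matrix.trace_sum]
        simp only [Matrix.trace_smul, smul_eq_mul]
        rw [Finset.sum_div]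
        simp [mul_div_assoc]
      rw [this, hg]
      simp
    have h1 : Matrix.det (Matrix.of fun r s : Fin d => ((v r * v s).trace / p)) = 0 := by
      by_contra hne
      have hvm : Matrix.vecMul g (Matrix.of fun r s : Fin d => ((v r * v s).trace / p)) = 0 := by
        funext s
        simp only [Matrix.vecMul, dotProduct, Matrix.of_apply, Pi.zero_apply]
        exact key (v s)
      exact hgi (congrFun (Matrix.eq_zero_of_vecMul_eq_zero hne hvm) i)
    have h2 : Matrix.det (Matrix.of fun r s : Fin (d+1) => (B r * B s).trace / p) = 0 := by
      by_contra hne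
      set g' : Fin (d+1) → ℝ := Fin.cons 0 g with hg'
      have hvm : Matrix.vecMul g' (Matrix.of fun r s : Fin (d+1) => (B r * B s).trace / p) = 0 := by
        funext s
        simp only [Matrix.vecMul, dotProduct, Matrix.of_apply, Pi.zero_apply]
        rw [Fin.sum_univ_succ]
        have : ∀ l : Fin d, g' l.succ * ((B l.succ * B s).trace / p)
            = g l * ((v l * B s).trace / p) := by
          intro l; rw [hg', hB]; simp [Fin.cons_succ]
        rw [Finset.sum_congr rfl (fun l _ => this l), key (B s)]
        simp [hg']
      have := Matrix.eq_zero_of_vecMul_eq_zero hne hvm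
      have : g' i.succ = 0 := congrFun this i.succ
      rw [hg', Fin.cons_succ] at this
      exact hgi this
    rw [hGDE, h2, hsub, h1, zero_mul]


/-- Lemma 2.3, determinant identity. With the same setting as Statement 13,
`M^{(d)}(Σ) = M^{(d)}·⟨Σ_⊥,Σ_⊥⟩`, where `M^{(d)}(Σ)` is the average over `d`-subsets `J`
of the determinants of the `(d+1)×(d+1)` Gram matrices of `(Σ,Σ_{i₁},…,Σ_{i_d})`. -/
theorem statement14 (p m d : ℕ) (hp : 0 < p) (hd1 : 1 ≤ d) (hdm : d ≤ m)
    (Sig : ℕ → Matrix (Fin p) (Fin p) ℝ)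
    (hsymm : ∀ i, i < m → (Sig i).IsSymm)
    (hdim : Module.finrank ℝ (Submodule.span ℝ (Sig '' Set.Iio m)) = d)
    (A A0 Aperp : Matrix (Fin p) (Fin p) ℝ)
    (hAsymm : A.IsSymm)
    (hA0 : A0 ∈ Submodule.span ℝ (Sig '' Set.Iio m))
    (hperp : ∀ B ∈ Submodule.span ℝ (Sig '' Set.Iio m), (Aperp * B).trace / p = 0)
    (hdecomp : A = A0 + Aperp) :
    ((m.choose d : ℝ))⁻¹ *
        ∑ J ∈ (Finset.range m).powersetCard d, PaperDefs.gramDetExt p d Sig A J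
      = PaperDefs.Mavg (PaperDefs.gramG p Sig) m d * ((Aperp * Aperp).trace / p) := by
  have hJ : ∀ J ∈ (Finset.range m).powersetCard d,
      PaperDefs.gramDetExt p d Sig A J
        = PaperDefs.subdet (PaperDefs.gramG p Sig) J * ((Aperp * Aperp).trace / p) := by
    intro J hJ
    obtain ⟨h1, h2⟩ := Finset.mem_powersetCard.mp hJ
    exact aux_main14 p m d Sig hdim A A0 Aperp hA0 hperp hdecomp J h1 h2
  rw [Finset.sum_congr rfl hJ, ← Finset.sum_mul, PaperDefs.Mavg]
  ring
end
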